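/- arXiv:1901.09158 — 4 statements merged into one kernel-verified Lean document; each statement's English description precedes it below -/
import Mathlib

section
/- Let T ∈ Tree(k) and T_j ∈ Tree(n_j) for j = 1,...,k, and let N = n_1 + ... + n_k. Then the composition T(T_1,...,T_k), defined as the set of strings obtained by taking a string i_1...i_ℓ in T and replacing each letter i_m by a nonempty string from T_{i_m} (with letters shifted by the canonical inclusions ι_j : [n_j] → [N]), is again a rooted subtree of T_{N,free}; in particular it is closed under taking final substrings and is connected. -/
/-- A rooted subtree of the tree of alternating strings on alphabet `α`:
a set of alternating strings containing the empty string and closed under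
deleting the first letter (equivalently, connected and containing the root). -/
def IsRootedSubtree {α : Type*} (S : Set (List α)) : Prop :=
  (∀ s ∈ S, s.Chain' (· ≠ ·)) ∧ [] ∈ S ∧ ∀ s ∈ S, s.tail ∈ S

/-- The operadic composition `T(T_1,…,T_k)` of rooted subtrees: strings are
obtained from a string `i_1 … i_ℓ` of `T` by replacing each letter `i_m` by a
nonempty string of `T_{i_m}`, with letters shifted into the disjoint union
alphabet `Σ i, Fin (n i)` (the canonical inclusions `ι_j : [n_j] → [N]`). -/
def Compose {k : ℕ} {n : Fin k → ℕ} (T : Set (List (Fin k)))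
    (Ts : ∀ i : Fin k, Set (List (Fin (n i)))) :
    Set (List (Σ i : Fin k, Fin (n i))) :=
  { w | ∃ c : List (Σ i : Fin k, List (Fin (n i))),
      c.map Sigma.fst ∈ T ∧ (∀ p ∈ c, p.2 ∈ Ts p.1 ∧ p.2 ≠ []) ∧
      w = c.foldr
        (fun p acc => p.2.map (fun x => (⟨p.1, x⟩ : Σ i : Fin k, Fin (n i))) ++ acc) [] }

def Fd {k : ℕ} {n : Fin k → ℕ} (c : List (Σ i : Fin k, List (Fin (n i)))) :
    List (Σ i : Fin k, Fin (n i)) :=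
  c.foldr (fun p acc => p.2.map (fun x => (⟨p.1, x⟩ : Σ i : Fin k, Fin (n i))) ++ acc) []

lemma Fd_cons {k : ℕ} {n : Fin k → ℕ} (p : Σ i : Fin k, List (Fin (n i))) (c) :
    Fd (p :: c) = p.2.map (fun x => (⟨p.1, x⟩ : Σ i : Fin k, Fin (n i))) ++ Fd c := rfl

lemma Fd_head {k : ℕ} {n : Fin k → ℕ} (q : Σ i : Fin k, List (Fin (n i))) (c)
    (hq : q.2 ≠ []) : ∀ y ∈ (Fd (q :: c)).head?, y.1 = q.1 := by
  obtain ⟨a, t, ht⟩ := List.exists_cons_of_ne_nil hq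
  intro y hy
  rw [Fd_cons, ht] at hy
  simp at hy
  rw [← hy]

lemma chainFd {k : ℕ} {n : Fin k → ℕ} (c : List (Σ i : Fin k, List (Fin (n i))))
    (hne : ∀ p ∈ c, p.2 ≠ []) (hbl : ∀ p ∈ c, p.2.Chain' (· ≠ ·))
    (hfst : (c.map Sigma.fst).Chain' (· ≠ ·)) : (Fd c).Chain' (· ≠ ·) := by
  induction c with
  | nil => exact List.isChain_nil
  | cons p rest ih =>
    rw [Fd_cons]; show List.IsChain _ _; rw [List.isChain_append]
    refine ⟨?_, ih (fun q hq => hne q (List.mem_cons_of_mem _ hq))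
        (fun q hq => hbl q (List.mem_cons_of_mem _ hq)) (by
          rw [List.map_cons] at hfst; exact List.IsChain.tail hfst), ?_⟩
    · rw [List.isChain_map]
      exact List.IsChain.imp (fun a b hab h => hab (by
        simpa using h)) (hbl p List.mem_cons_self)
    · intro x hx y hy
      have hx1 : x.1 = p.1 := by
        rw [List.getLast?_map, Option.mem_def, Option.map_eq_some_iff] at hx
        obtain ⟨z, hz, hzx⟩ := hx
        rw [← hzx]
      cases rest with
      | nil => simp [Fd] at hy
      | cons q rest' =>
        have hy1 : y.1 = q.1 := Fd_head q rest' (hne q (by simp)) y hy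
        have : p.1 ≠ q.1 := by
          rw [List.map_cons, List.map_cons] at hfst
          exact List.IsChain.rel hfst
        intro h; exact this (by rw [← hx1, ← hy1, h])

/-- The composition of rooted subtrees is again a rooted subtree (in particular,
closed under taking final substrings, hence connected and containing the root). -/
theorem stmt2 {k : ℕ} {n : Fin k → ℕ} (T : Set (List (Fin k)))
    (Ts : ∀ i : Fin k, Set (List (Fin (n i))))
    (hT : IsRootedSubtree T) (hTs : ∀ i, IsRootedSubtree (Ts i)) :
    IsRootedSubtree (Compose T Ts) := by
  obtain ⟨hTc, hTr, hTt⟩ := hT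
  refine ⟨?_, ⟨[], by simpa using hTr, by simp, rfl⟩, ?_⟩
  · rintro s ⟨c, hc1, hc2, rfl⟩
    exact chainFd c (fun p hp => (hc2 p hp).2)
      (fun p hp => (hTs p.1).1 _ (hc2 p hp).1) (hTc _ hc1)
  · rintro s ⟨c, hc1, hc2, rfl⟩
    cases c with
    | nil => exact ⟨[], by simpa using hTr, by simp, rfl⟩
    | cons p rest =>
      obtain ⟨a, t, ht⟩ := List.exists_cons_of_ne_nil (hc2 p (by simp)).2
      by_cases h : t = []
      · refine ⟨rest, ?_, fun q hq => hc2 q (List.mem_cons_of_mem _ hq), ?_⟩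
        · have := hTt _ hc1
          simpa using this
        · show (Fd (p :: rest)).tail = Fd rest
          rw [Fd_cons, ht, h]
          simp
      · refine ⟨⟨p.1, t⟩ :: rest, by simpa using hc1, ?_, ?_⟩
        · intro q hq
          rw [List.mem_cons] at hq
          rcases hq with rfl | hq
          · refine ⟨?_, h⟩
            have := (hTs p.1).2.2 _ (hc2 p (by simp)).1
            rw [ht] at this
            exact this
          · exact hc2 q (List.mem_cons_of_mem _ hq)
        · show (Fd (p :: rest)).tail = Fd (⟨p.1, t⟩ :: rest)
          rw [Fd_cons, Fd_cons, ht]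
          simp
end

section
/- Let T, T' ∈ Tree(k) and T_j, T_j' ∈ Tree(n_j) for j = 1,...,k, and let N = n_1 + ... + n_k. Then ρ_N(T(T_1,...,T_k), T'(T_1',...,T_k')) ≤ max(ρ_k(T,T'), ρ_{n_1}(T_1,T_1'), ..., ρ_{n_k}(T_k,T_k')). In other words, operad composition of rooted subtrees is 1-Lipschitz in each argument with respect to the ultrametrics ρ. -/
/-- `B_ℓ(S)`: the strings of `S` of length at most `ℓ`. -/
def ballSet {α : Type*} (ℓ : ℕ) (S : Set (List α)) : Set (List α) :=
  {s ∈ S | s.length ≤ ℓ}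

-- ρ(S,S') = exp(−sup{ℓ : B_ℓ(S) = B_ℓ(S')}), with value 0 when S = S'
open Classical in
noncomputable def rhoSet {α : Type*} (S S' : Set (List α)) : ℝ :=
  if S = S' then 0
  else Real.exp (-((sSup {ℓ : ℕ | ballSet ℓ S = ballSet ℓ S'} : ℕ) : ℝ))

lemma mem_ballSet {α : Type*} {ℓ : ℕ} {S : Set (List α)} {s : List α} :
    s ∈ ballSet ℓ S ↔ s ∈ S ∧ s.length ≤ ℓ := Iff.rfl

lemma ballSet_anti {α : Type*} {S S' : Set (List α)} {ℓ m : ℕ} (h : ℓ ≤ m)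
    (hm : ballSet m S = ballSet m S') : ballSet ℓ S = ballSet ℓ S' := by
  ext s
  constructor <;> rintro ⟨hs, hl⟩
  · have h1 : s ∈ ballSet m S := ⟨hs, hl.trans h⟩
    rw [hm] at h1; exact ⟨h1.1, hl⟩
  · have h1 : s ∈ ballSet m S' := ⟨hs, hl.trans h⟩
    rw [← hm] at h1; exact ⟨h1.1, hl⟩

lemma ballSet_zero {α : Type*} {S S' : Set (List α)} (h : [] ∈ S) (h' : [] ∈ S') :
    ballSet 0 S = ballSet 0 S' := by
  ext s
  constructor <;> rintro ⟨hs, hl⟩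
  · have : s = [] := List.length_eq_zero_iff.mp (Nat.le_zero.mp hl)
    subst this; exact ⟨h', le_refl _⟩
  · have : s = [] := List.length_eq_zero_iff.mp (Nat.le_zero.mp hl)
    subst this; exact ⟨h, le_refl _⟩

lemma ballSet_eq_of_eq {α : Type*} {S S' : Set (List α)} (h : S = S') (ℓ : ℕ) :
    ballSet ℓ S = ballSet ℓ S' := by rw [h]

lemma eq_of_forall_ballSet_eq {α : Type*} {S S' : Set (List α)}
    (h : ∀ ℓ, ballSet ℓ S = ballSet ℓ S') : S = S' := by
  ext s
  constructor <;> intro hs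
  · have h1 : s ∈ ballSet s.length S := ⟨hs, le_refl _⟩
    rw [h s.length] at h1; exact h1.1
  · have h1 : s ∈ ballSet s.length S' := ⟨hs, le_refl _⟩
    rw [← h s.length] at h1; exact h1.1

lemma list_length_le_sum (l : List ℕ) (h : ∀ x ∈ l, 1 ≤ x) : l.length ≤ l.sum := by
  induction l with
  | nil => simp
  | cons a t ih =>
    simp only [List.length_cons, List.sum_cons]
    have := ih (fun x hx => h x (List.mem_cons_of_mem _ hx))
    have ha := h a List.mem_cons_self
    omega

lemma nil_mem_compose {k : ℕ} {n : Fin k → ℕ} {T : Set (List (Fin k))}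
    {Ts : ∀ i : Fin k, Set (List (Fin (n i)))} (h : [] ∈ T) :
    [] ∈ Compose T Ts :=
  ⟨[], by simpa using h, by simp, rfl⟩

lemma compose_ball_subset {k : ℕ} {n : Fin k → ℕ} {T T' : Set (List (Fin k))}
    {Ts Ts' : ∀ i : Fin k, Set (List (Fin (n i)))} {ℓ : ℕ}
    (hT : ballSet ℓ T = ballSet ℓ T')
    (hTs : ∀ i, ballSet ℓ (Ts i) = ballSet ℓ (Ts' i)) :
    ballSet ℓ (Compose T Ts) ⊆ ballSet ℓ (Compose T' Ts') := by
  rintro w ⟨⟨c, hc1, hc2, rfl⟩, hlen⟩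
  have hsum : ∀ c' : List (Σ i : Fin k, List (Fin (n i))),
      (c'.foldr (fun p acc =>
        p.2.map (fun x => (⟨p.1, x⟩ : Σ i : Fin k, Fin (n i))) ++ acc) []).length
      = (c'.map fun p => p.2.length).sum := by
    intro c'
    induction c' with
    | nil => simp
    | cons a t ih => simp [ih, Function.comp_def]
  rw [hsum] at hlen
  have hone : ∀ x ∈ c.map fun p => p.2.length, 1 ≤ x := by
    rintro x hx
    obtain ⟨p, hp, rfl⟩ := List.mem_map.mp hx
    exact List.length_pos_iff.mpr (hc2 p hp).2
  have hclen : c.length ≤ ℓ := by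
    have := list_length_le_sum _ hone
    simpa using this.trans hlen
  have hfst : c.map Sigma.fst ∈ T' := by
    have h1 : c.map Sigma.fst ∈ ballSet ℓ T := ⟨hc1, by simpa using hclen⟩
    rw [hT] at h1; exact h1.1
  refine ⟨⟨c, hfst, fun p hp => ?_, rfl⟩, by rw [hsum]; exact hlen⟩
  have hplen : p.2.length ≤ ℓ := by
    have : p.2.length ≤ (c.map fun p => p.2.length).sum :=
      List.single_le_sum (fun x _ => Nat.zero_le x) _
        (List.mem_map.mpr ⟨p, hp, rfl⟩)
    exact this.trans hlen
  have h1 : p.2 ∈ ballSet ℓ (Ts p.1) := ⟨(hc2 p hp).1, hplen⟩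
  rw [hTs p.1] at h1
  exact ⟨h1.1, (hc2 p hp).2⟩

lemma rhoSet_nonneg {α : Type*} (S S' : Set (List α)) : 0 ≤ rhoSet S S' := by
  rw [rhoSet]
  split
  · exact le_refl _
  · exact (Real.exp_pos _).le

lemma rhoSet_le_one {α : Type*} (S S' : Set (List α)) : rhoSet S S' ≤ 1 := by
  rw [rhoSet]
  split
  · exact zero_le_one
  · exact Real.exp_le_one_iff.mpr (by simp)

lemma rhoSet_le_of_not_ball {α : Type*} {S S' : Set (List α)} {L : ℕ}
    (h0 : [] ∈ S) (h0' : [] ∈ S')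
    (h : ballSet (L + 1) S ≠ ballSet (L + 1) S') :
    Real.exp (-(L : ℝ)) ≤ rhoSet S S' := by
  have hne : S ≠ S' := fun he => h (ballSet_eq_of_eq he _)
  rw [rhoSet, if_neg hne]
  apply Real.exp_le_exp.mpr
  simp only [neg_le_neg_iff, Nat.cast_le]
  refine csSup_le ⟨0, ballSet_zero h0 h0'⟩ (fun m hm => ?_)
  by_contra hc
  exact h (ballSet_anti (by omega) hm)

/-- Operad composition of rooted subtrees is 1-Lipschitz in each argument:
`ρ(T(T₁,…,T_k), T'(T₁',…,T_k')) ≤ max(ρ(T,T'), max_j ρ(T_j,T_j'))`. -/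
theorem stmt4 {k : ℕ} {n : Fin k → ℕ}
    (T T' : Set (List (Fin k))) (Ts Ts' : ∀ i : Fin k, Set (List (Fin (n i))))
    (hT : IsRootedSubtree T) (hT' : IsRootedSubtree T')
    (hTs : ∀ i, IsRootedSubtree (Ts i)) (hTs' : ∀ i, IsRootedSubtree (Ts' i)) :
    rhoSet (Compose T Ts) (Compose T' Ts') ≤
      max (rhoSet T T') (⨆ i : Fin k, rhoSet (Ts i) (Ts' i)) := by
  by_cases hC : Compose T Ts = Compose T' Ts'
  · rw [rhoSet, if_pos hC]
    exact le_max_of_le_left (rhoSet_nonneg _ _)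
  rw [rhoSet, if_neg hC]
  set A := {ℓ : ℕ | ballSet ℓ (Compose T Ts) = ballSet ℓ (Compose T' Ts')} with hA
  have hdc : ∀ {a b : ℕ}, a ≤ b → b ∈ A → a ∈ A := fun h hb => ballSet_anti h hb
  have hA0 : 0 ∈ A := ballSet_zero (nil_mem_compose hT.2.1) (nil_mem_compose hT'.2.1)
  have hbdd : BddAbove A := by
    by_contra hb
    apply hC
    refine eq_of_forall_ballSet_eq (fun ℓ => ?_)
    obtain ⟨m, hm, hlm⟩ := (not_bddAbove_iff.mp hb) ℓ
    exact hdc hlm.le hm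
  set L := sSup A with hL
  have hLsucc : L + 1 ∉ A := by
    intro h
    have := le_csSup hbdd h
    omega
  have key : ¬ (ballSet (L+1) T = ballSet (L+1) T' ∧
      ∀ i, ballSet (L+1) (Ts i) = ballSet (L+1) (Ts' i)) := by
    rintro ⟨h1, h2⟩
    exact hLsucc (Set.Subset.antisymm (compose_ball_subset h1 h2)
      (compose_ball_subset h1.symm (fun i => (h2 i).symm)))
  rcases not_and_or.mp key with h | h
  · refine le_max_of_le_left ?_
    exact rhoSet_le_of_not_ball hT.2.1 hT'.2.1 h
  · push_neg at h
    obtain ⟨i, hi⟩ := h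
    refine le_max_of_le_right ?_
    have h1 : Real.exp (-(L : ℝ)) ≤ rhoSet (Ts i) (Ts' i) :=
      rhoSet_le_of_not_ball (hTs i).2.1 (hTs' i).2.1 hi
    refine h1.trans (le_ciSup (f := fun j => rhoSet (Ts j) (Ts' j)) ⟨1, ?_⟩ i)
    rintro x ⟨j, rfl⟩
    exact rhoSet_le_one _ _
end

section
/- Let π be a non-crossing partition of [ℓ] and let S be the set of edges of graph(π) that do not touch the root vertex (equivalently, edges between nested blocks). Then there is a bijection between quotients τ of π and subsets A ⊆ S, under which I(τ) = I(π) − |A|, where I(·) denotes the number of inner blocks (blocks at depth ≥ 2 in the nesting tree). Consequently, for any integer n ≥ 1, the sum over all quotients τ of π of (n−1)^{I(τ)} equals n^{I(π)}. -/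
/-- Partitions of finite subsets of `ℕ`, given by their set of blocks. -/
abbrev Blocks : Type := Finset (Finset ℕ)

/-- `π` is a non-crossing partition (of its ground set `⋃ π`). -/
def IsNC (π : Blocks) : Prop :=
  (∀ B ∈ π, B.Nonempty) ∧
  (∀ B ∈ π, ∀ C ∈ π, B ≠ C → Disjoint B C) ∧
  (∀ B ∈ π, ∀ C ∈ π, B ≠ C →
    ¬ ∃ i₁ j₁ i₂ j₂ : ℕ, i₁ < j₁ ∧ j₁ < i₂ ∧ i₂ < j₂ ∧
      i₁ ∈ B ∧ i₂ ∈ B ∧ j₁ ∈ C ∧ j₂ ∈ C)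

/-- `V` is nested inside `W`. -/
def NestedIn (V W : Finset ℕ) : Prop :=
  ∃ j ∈ W, ∃ k ∈ W, ∀ x ∈ V, j < x ∧ x < k

/-- `V` is immediately nested inside `W` (an edge of the nesting tree of `π`
not touching the root). -/
def ImmNested (π : Blocks) (V W : Finset ℕ) : Prop :=
  NestedIn V W ∧ ¬ ∃ X ∈ π, NestedIn V X ∧ NestedIn X W

/-- Adjacency of blocks in the nesting tree (away from the root). -/
def AdjBlocks (π : Blocks) (V W : Finset ℕ) : Prop :=
  ImmNested π V W ∨ ImmNested π W V

/-- The edges of `graph(π)` not touching the root vertex. -/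
def nestEdges (π : Blocks) : Set (Finset ℕ × Finset ℕ) :=
  {p | p.1 ∈ π ∧ p.2 ∈ π ∧ ImmNested π p.1 p.2}

/-- The number of inner blocks of `π` (blocks of depth ≥ 2, i.e. nested in some block). -/
noncomputable def innerCount (π : Blocks) : ℕ :=
  {V : Finset ℕ | V ∈ π ∧ ∃ W ∈ π, NestedIn V W}.ncard

/-- `τ` is a quotient of `π`: a partition of the same ground set, each block of `π`
lies in a block of `τ`, and each block of `τ` is a union of blocks of `π` forming a
connected subgraph of `graph(π) ∖ {∅}`. -/
def IsQuotient (π τ : Blocks) : Prop :=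
  (∀ B ∈ τ, B.Nonempty) ∧
  (∀ B ∈ τ, ∀ C ∈ τ, B ≠ C → Disjoint B C) ∧
  τ.biUnion id = π.biUnion id ∧
  (∀ B ∈ π, ∃ C ∈ τ, B ⊆ C) ∧
  ∀ C ∈ τ, ∀ V ∈ π, ∀ W ∈ π, V ⊆ C → W ⊆ C →
    Relation.ReflTransGen
      (fun X Y => X ∈ π ∧ Y ∈ π ∧ X ⊆ C ∧ Y ⊆ C ∧ AdjBlocks π X Y) V W

-- Quotients of `π` are in bijection with subsets `A` of the set `S` of non-root
-- edges of `graph(π)`, with `I(τ) = I(π) − |A|`; consequently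
-- `Σ_{quotients τ} (n−1)^{I(τ)} = n^{I(π)}` for every `n ≥ 1`.
----------------------------------------------------------------
-- auxiliary development
----------------------------------------------------------------

open Classical

namespace NCQ

lemma nested_trans {B C D : Finset ℕ} (h1 : NestedIn B C) (h2 : NestedIn C D) :
    NestedIn B D := by
  obtain ⟨j, hj, k, hk, h⟩ := h1
  obtain ⟨j', hj', k', hk', h'⟩ := h2
  exact ⟨j', hj', k', hk', fun x hx =>
    ⟨lt_trans (h' j hj).1 (h x hx).1, lt_trans (h x hx).2 (h' k hk).2⟩⟩

lemma nested_irrefl {B : Finset ℕ} (hB : B.Nonempty) : ¬ NestedIn B B := by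
  rintro ⟨j, hj, k, hk, h⟩
  exact lt_irrefl j (h j hj).1

lemma nested_asymm {B C : Finset ℕ} (hB : B.Nonempty) :
    NestedIn B C → ¬ NestedIn C B := fun h1 h2 => nested_irrefl hB (nested_trans h1 h2)

variable (π : Blocks)

lemma sep_half (hnc : IsNC π) {B C : Finset ℕ} (hB : B ∈ π) (hC : C ∈ π) (hne : B ≠ C)
    (hBne : B.Nonempty) (hCne : C.Nonempty)
    (hac : B.min' hBne < C.min' hCne) :
    NestedIn C B ∨ ∀ x ∈ B, ∀ y ∈ C, x < y := by
  by_cases hex : ∃ x ∈ B, C.max' hCne < x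
  · obtain ⟨x, hx, hdx⟩ := hex
    left
    exact ⟨B.min' hBne, B.min'_mem hBne, x, hx, fun y hy =>
      ⟨lt_of_lt_of_le hac (C.min'_le y hy), lt_of_le_of_lt (C.le_max' y hy) hdx⟩⟩
  · push_neg at hex
    have hbd : B.max' hBne ≤ C.max' hCne := hex _ (B.max'_mem hBne)
    have hbd' : B.max' hBne ≠ C.max' hCne := by
      intro h
      exact (Finset.disjoint_left.1 (hnc.2.1 B hB C hC hne) (B.max'_mem hBne))
        (h ▸ C.max'_mem hCne)
    have hbd2 : B.max' hBne < C.max' hCne := lt_of_le_of_ne hbd hbd'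
    by_cases hcb : C.min' hCne < B.max' hBne
    · exact absurd ⟨B.min' hBne, C.min' hCne, B.max' hBne, C.max' hCne,
        hac, hcb, hbd2, B.min'_mem hBne, B.max'_mem hBne, C.min'_mem hCne, C.max'_mem hCne⟩
        (hnc.2.2 B hB C hC hne)
    · push_neg at hcb
      have hbc : B.max' hBne ≠ C.min' hCne := by
        intro h
        exact (Finset.disjoint_left.1 (hnc.2.1 B hB C hC hne) (B.max'_mem hBne))
          (h ▸ C.min'_mem hCne)
      right
      intro x hx y hy
      calc x ≤ B.max' hBne := B.le_max' x hx
        _ < C.min' hCne := lt_of_le_of_ne hcb hbc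
        _ ≤ y := C.min'_le y hy

lemma sep (hnc : IsNC π) {B C : Finset ℕ} (hB : B ∈ π) (hC : C ∈ π) (hne : B ≠ C) :
    NestedIn B C ∨ NestedIn C B ∨ (∀ x ∈ B, ∀ y ∈ C, x < y) ∨ (∀ x ∈ B, ∀ y ∈ C, y < x) := by
  have hBne := hnc.1 B hB
  have hCne := hnc.1 C hC
  rcases lt_trichotomy (B.min' hBne) (C.min' hCne) with h | h | h
  · rcases sep_half π hnc hB hC hne hBne hCne h with h' | h'
    · exact Or.inr (Or.inl h')
    · exact Or.inr (Or.inr (Or.inl h'))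
  · exact absurd (h ▸ C.min'_mem hCne)
      (Finset.disjoint_left.1 (hnc.2.1 B hB C hC hne) (B.min'_mem hBne))
  · rcases sep_half π hnc hC hB hne.symm hCne hBne h with h' | h'
    · exact Or.inl h'
    · exact Or.inr (Or.inr (Or.inr (fun x hx y hy => h' y hy x hx)))

lemma comp (hnc : IsNC π) {B C D : Finset ℕ} (hC : C ∈ π) (hD : D ∈ π) (hCD : C ≠ D)
    (hBne : B.Nonempty) (h1 : NestedIn B C) (h2 : NestedIn B D) :
    NestedIn C D ∨ NestedIn D C := by
  obtain ⟨x, hx⟩ := hBne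
  obtain ⟨j, hj, k, hk, h⟩ := h1
  obtain ⟨j', hj', k', hk', h'⟩ := h2
  rcases sep π hnc hC hD hCD with hs | hs | hs | hs
  · exact Or.inl hs
  · exact Or.inr hs
  · exact absurd (lt_trans (h' x hx).1 (h x hx).2) (lt_asymm (hs k hk j' hj'))
  · exact absurd (lt_trans (h x hx).1 (h' x hx).2) (lt_asymm (hs j hj k' hk'))

noncomputable section

def anc (B : Finset ℕ) : Finset (Finset ℕ) := π.filter (fun W => NestedIn B W)

def depth (B : Finset ℕ) : ℕ := (anc π B).card

def Inner (B : Finset ℕ) : Prop := B ∈ π ∧ ∃ W ∈ π, NestedIn B W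

variable {π}

lemma mem_anc {B W : Finset ℕ} : W ∈ anc π B ↔ W ∈ π ∧ NestedIn B W := Finset.mem_filter

lemma depth_lt (hnc : IsNC π) {B P : Finset ℕ} (hB : B ∈ π) (hP : P ∈ π)
    (h : NestedIn B P) : depth π P < depth π B := by
  apply Finset.card_lt_card
  constructor
  · intro W hW
    exact mem_anc.2 ⟨(mem_anc.1 hW).1, nested_trans h (mem_anc.1 hW).2⟩
  · intro hsub
    exact nested_irrefl (hnc.1 P hP) (mem_anc.1 (hsub (mem_anc.2 ⟨hP, h⟩))).2

variable (π)

def parent (B : Finset ℕ) : Finset ℕ :=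
  if h : (anc π B).Nonempty then
    (Finset.exists_max_image (anc π B) (depth π) h).choose
  else ∅

variable {π}

lemma parent_spec (hnc : IsNC π) {B : Finset ℕ} (hB : Inner π B) :
    parent π B ∈ π ∧ ImmNested π B (parent π B) := by
  obtain ⟨hBπ, W, hW, hn⟩ := hB
  have hne : (anc π B).Nonempty := ⟨W, mem_anc.2 ⟨hW, hn⟩⟩
  have hpar : parent π B = (Finset.exists_max_image (anc π B) (depth π) hne).choose := by
    rw [parent, dif_pos hne]
  obtain ⟨hmem, hmax⟩ := (Finset.exists_max_image (anc π B) (depth π) hne).choose_spec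
  rw [hpar]
  refine ⟨(mem_anc.1 hmem).1, (mem_anc.1 hmem).2, ?_⟩
  rintro ⟨X, hX, h1, h2⟩
  exact absurd (hmax X (mem_anc.2 ⟨hX, h1⟩))
    (not_le.2 (depth_lt hnc hX (mem_anc.1 hmem).1 h2))

lemma parent_mem (hnc : IsNC π) {B : Finset ℕ} (hB : Inner π B) : parent π B ∈ π :=
  (parent_spec hnc hB).1

lemma parent_nested (hnc : IsNC π) {B : Finset ℕ} (hB : Inner π B) :
    NestedIn B (parent π B) := (parent_spec hnc hB).2.1

lemma imm_parent (hnc : IsNC π) {B : Finset ℕ} (hB : Inner π B) :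
    ImmNested π B (parent π B) := (parent_spec hnc hB).2

lemma parent_depth_lt (hnc : IsNC π) {B : Finset ℕ} (hB : Inner π B) :
    depth π (parent π B) < depth π B :=
  depth_lt hnc hB.1 (parent_mem hnc hB) (parent_nested hnc hB)

lemma parent_unique (hnc : IsNC π) {B P : Finset ℕ} (hB : B ∈ π) (hP : P ∈ π)
    (h : ImmNested π B P) : P = parent π B := by
  have hBI : Inner π B := ⟨hB, P, hP, h.1⟩
  by_contra hne
  rcases comp π hnc hP (parent_mem hnc hBI) (fun he => hne he) (hnc.1 B hB)
      h.1 (parent_nested hnc hBI) with hc | hc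
  · exact (imm_parent hnc hBI).2 ⟨P, hP, h.1, hc⟩
  · exact h.2 ⟨parent π B, parent_mem hnc hBI, parent_nested hnc hBI, hc⟩

lemma parent_ne (hnc : IsNC π) {B : Finset ℕ} (hB : Inner π B) : parent π B ≠ B := by
  intro h
  have := parent_nested hnc hB
  rw [h] at this
  exact nested_irrefl (hnc.1 B hB.1) this

end

section Climb

variable (F : Finset (Finset ℕ))

noncomputable def climb : ℕ → Finset ℕ → Finset ℕ
  | 0, B => B
  | n+1, B => if B ∈ F then climb n (parent π B) else B

noncomputable def qtop (B : Finset ℕ) : Finset ℕ := climb π F (depth π B) B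

variable {π F}

lemma climb_of_not_mem (n : ℕ) {B : Finset ℕ} (h : B ∉ F) : climb π F n B = B := by
  cases n <;> simp [climb, h]

lemma not_mem_F_of_depth_zero (hF : ∀ B ∈ F, Inner π B) {B : Finset ℕ}
    (hd : depth π B = 0) : B ∉ F := by
  intro hB
  obtain ⟨_, W, hW, hn⟩ := hF B hB
  have : W ∈ anc π B := mem_anc.2 ⟨hW, hn⟩
  simp [depth, Finset.card_eq_zero] at hd
  rw [hd] at this
  exact absurd this (Finset.notMem_empty W)

lemma climb_congr (hnc : IsNC π) (hF : ∀ B ∈ F, Inner π B) :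
    ∀ n m : ℕ, ∀ B : Finset ℕ, B ∈ π → depth π B ≤ n → depth π B ≤ m →
      climb π F n B = climb π F m B := by
  intro n
  induction n with
  | zero => intro m B hB hn _
            rw [climb_of_not_mem m (not_mem_F_of_depth_zero hF (Nat.le_zero.1 hn))]
            rfl
  | succ n ih =>
    intro m B hB hn hm
    by_cases hBF : B ∈ F
    · cases m with
      | zero => rw [climb_of_not_mem (n+1) (not_mem_F_of_depth_zero hF (Nat.le_zero.1 hm))]
                rfl
      | succ m =>
        have hI : Inner π B := hF B hBF
        have hd := parent_depth_lt hnc hI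
        show climb π F (n+1) B = climb π F (m+1) B
        simp only [climb, if_pos hBF]
        exact ih m (parent π B) (parent_mem hnc hI)
          (Nat.le_of_lt_succ (lt_of_lt_of_le hd hn))
          (Nat.le_of_lt_succ (lt_of_lt_of_le hd hm))
    · rw [climb_of_not_mem _ hBF, climb_of_not_mem _ hBF]

lemma qtop_eq_climb (hnc : IsNC π) (hF : ∀ B ∈ F, Inner π B) {B : Finset ℕ} {n : ℕ}
    (hB : B ∈ π) (hn : depth π B ≤ n) : qtop π F B = climb π F n B :=
  climb_congr hnc hF _ n B hB le_rfl hn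

lemma qtop_of_not_mem {B : Finset ℕ} (h : B ∉ F) : qtop π F B = B :=
  climb_of_not_mem _ h

lemma qtop_parent (hnc : IsNC π) (hF : ∀ B ∈ F, Inner π B) {B : Finset ℕ} (hB : B ∈ F) :
    qtop π F (parent π B) = qtop π F B := by
  have hI : Inner π B := hF B hB
  have hd := parent_depth_lt hnc hI
  obtain ⟨k, hk⟩ : ∃ k, depth π B = k + 1 :=
    ⟨depth π B - 1, (Nat.succ_pred_eq_of_pos (Nat.pos_of_ne_zero (by omega))).symm⟩
  have h1 : qtop π F B = climb π F k (parent π B) := by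
    rw [qtop, hk]
    simp only [climb, if_pos hB]
  rw [h1, qtop_eq_climb hnc hF (parent_mem hnc hI) (by omega : depth π (parent π B) ≤ k)]

lemma climb_good (hnc : IsNC π) (hF : ∀ B ∈ F, Inner π B) :
    ∀ n : ℕ, ∀ B : Finset ℕ, B ∈ π → depth π B ≤ n →
      climb π F n B ∈ π ∧ climb π F n B ∉ F := by
  intro n
  induction n with
  | zero => intro B hB hn
            exact ⟨hB, not_mem_F_of_depth_zero hF (Nat.le_zero.1 hn)⟩
  | succ n ih =>
    intro B hB hn
    by_cases hBF : B ∈ F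
    · have hI : Inner π B := hF B hBF
      have hd := parent_depth_lt hnc hI
      show climb π F (n+1) B ∈ π ∧ climb π F (n+1) B ∉ F
      simp only [climb, if_pos hBF]
      exact ih (parent π B) (parent_mem hnc hI) (by omega)
    · rw [climb_of_not_mem _ hBF]
      exact ⟨hB, hBF⟩

lemma qtop_mem (hnc : IsNC π) (hF : ∀ B ∈ F, Inner π B) {B : Finset ℕ} (hB : B ∈ π) :
    qtop π F B ∈ π := (climb_good hnc hF _ B hB le_rfl).1

lemma qtop_not_mem (hnc : IsNC π) (hF : ∀ B ∈ F, Inner π B) {B : Finset ℕ} (hB : B ∈ π) :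
    qtop π F B ∉ F := (climb_good hnc hF _ B hB le_rfl).2

lemma qtop_rel (hnc : IsNC π) (hF : ∀ B ∈ F, Inner π B) :
    ∀ n : ℕ, ∀ B : Finset ℕ, B ∈ π → depth π B ≤ n →
      qtop π F B = B ∨ NestedIn B (qtop π F B) := by
  intro n
  induction n with
  | zero => intro B hB hn
            exact Or.inl (qtop_of_not_mem (not_mem_F_of_depth_zero hF (Nat.le_zero.1 hn)))
  | succ n ih =>
    intro B hB hn
    by_cases hBF : B ∈ F
    · have hI : Inner π B := hF B hBF
      have hd := parent_depth_lt hnc hI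
      have heq := qtop_parent hnc hF hBF
      rcases ih (parent π B) (parent_mem hnc hI) (by omega) with h | h
      · right
        rw [← heq, h]
        exact parent_nested hnc hI
      · right
        rw [← heq]
        exact nested_trans (parent_nested hnc hI) h
    · exact Or.inl (qtop_of_not_mem hBF)

end Climb

section Fiber

variable (F : Finset (Finset ℕ))

noncomputable def fiber (B : Finset ℕ) : Finset ℕ :=
  (π.filter (fun X => qtop π F X = B)).biUnion id

noncomputable def quot : Blocks := (π.filter (fun B => B ∉ F)).image (fiber π F)

variable {π F}

lemma mem_fiber {x : ℕ} {B : Finset ℕ} :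
    x ∈ fiber π F B ↔ ∃ X, X ∈ π ∧ qtop π F X = B ∧ x ∈ X := by
  simp only [fiber, Finset.mem_biUnion, Finset.mem_filter, id_eq]
  tauto

lemma subset_fiber_qtop {B : Finset ℕ} (hB : B ∈ π) : B ⊆ fiber π F (qtop π F B) :=
  fun x hx => mem_fiber.2 ⟨B, hB, rfl, hx⟩

lemma subset_fiber_self {B : Finset ℕ} (hB : B ∈ π) (h : B ∉ F) : B ⊆ fiber π F B := by
  have := subset_fiber_qtop (F := F) hB
  rwa [qtop_of_not_mem h] at this

lemma blocks_eq_of_mem (hnc : IsNC π) {B C : Finset ℕ} (hB : B ∈ π) (hC : C ∈ π)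
    {x : ℕ} (hxB : x ∈ B) (hxC : x ∈ C) : B = C := by
  by_contra hne
  exact Finset.disjoint_left.1 (hnc.2.1 B hB C hC hne) hxB hxC

lemma qtop_eq_of_subset_fiber (hnc : IsNC π) {X B : Finset ℕ}
    (hX : X ∈ π) (h : X ⊆ fiber π F B) : qtop π F X = B := by
  obtain ⟨x, hx⟩ := hnc.1 X hX
  obtain ⟨X', hX', hq, hx'⟩ := mem_fiber.1 (h hx)
  rwa [blocks_eq_of_mem hnc hX hX' hx hx']

lemma fiber_disjoint (hnc : IsNC π) {B B' : Finset ℕ} (h : B ≠ B') :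
    Disjoint (fiber π F B) (fiber π F B') := by
  rw [Finset.disjoint_left]
  intro x hx hx'
  obtain ⟨X, hX, hq, hxX⟩ := mem_fiber.1 hx
  obtain ⟨X', hX', hq', hxX'⟩ := mem_fiber.1 hx'
  rw [blocks_eq_of_mem hnc hX hX' hxX hxX'] at hq
  exact h (hq ▸ hq'.symm ▸ rfl)

lemma fiber_nonempty (hnc : IsNC π) {B : Finset ℕ} (hB : B ∈ π) (h : B ∉ F) :
    (fiber π F B).Nonempty := by
  obtain ⟨x, hx⟩ := hnc.1 B hB
  exact ⟨x, subset_fiber_self hB h hx⟩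

lemma fiber_inj (hnc : IsNC π) (hF : ∀ B ∈ F, Inner π B) {B B' : Finset ℕ}
    (hB : B ∈ π) (hBF : B ∉ F) (h : fiber π F B = fiber π F B') : B = B' := by
  have h1 : B ⊆ fiber π F B' := h ▸ subset_fiber_self hB hBF
  have := qtop_eq_of_subset_fiber hnc hB h1
  rwa [qtop_of_not_mem hBF] at this

lemma fiber_elem_bound (hnc : IsNC π) (hF : ∀ B ∈ F, Inner π B) {B : Finset ℕ}
    {x : ℕ} (hx : x ∈ fiber π F B) :
    x ∈ B ∨ ∃ j ∈ B, ∃ k ∈ B, j < x ∧ x < k := by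
  obtain ⟨X, hX, hq, hxX⟩ := mem_fiber.1 hx
  rcases qtop_rel hnc hF _ X hX le_rfl with h | h
  · rw [hq] at h
    exact Or.inl (h ▸ hxX)
  · rw [hq] at h
    obtain ⟨j, hj, k, hk, hjk⟩ := h
    exact Or.inr ⟨j, hj, k, hk, (hjk x hxX).1, (hjk x hxX).2⟩

lemma nested_fiber_of_inner (hnc : IsNC π) (hF : ∀ B ∈ F, Inner π B) {B : Finset ℕ}
    (hB : Inner π B) (hBF : B ∉ F) :
    NestedIn (fiber π F B) (fiber π F (qtop π F (parent π B))) ∧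
      qtop π F (parent π B) ≠ B := by
  have hPmem := parent_mem hnc hB
  obtain ⟨j, hj, k, hk, hjk⟩ := parent_nested hnc hB
  constructor
  · refine ⟨j, subset_fiber_qtop hPmem hj, k, subset_fiber_qtop hPmem hk, ?_⟩
    intro x hx
    rcases fiber_elem_bound hnc hF hx with h | ⟨j', hj', k', hk', h1, h2⟩
    · exact hjk x h
    · exact ⟨lt_trans (hjk j' hj').1 h1, lt_trans h2 (hjk k' hk').2⟩
  · intro heq
    rcases qtop_rel hnc hF _ (parent π B) hPmem le_rfl with h | h
    · rw [heq] at h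
      exact parent_ne hnc hB h.symm
    · rw [heq] at h
      exact nested_asymm (hnc.1 B hB.1) (parent_nested hnc hB) h

lemma nested_of_nested_fiber (hnc : IsNC π) (hF : ∀ B ∈ F, Inner π B) {B B' : Finset ℕ}
    (hB : B ∈ π) (hBF : B ∉ F)
    (h : NestedIn (fiber π F B) (fiber π F B')) : NestedIn B B' := by
  obtain ⟨j, hj, k, hk, hjk⟩ := h
  obtain ⟨j₂, hj₂, hj₂le⟩ : ∃ j₂ ∈ B', j₂ ≤ j := by
    rcases fiber_elem_bound hnc hF hj with h | ⟨j', hj', _, _, h1, _⟩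
    · exact ⟨j, h, le_rfl⟩
    · exact ⟨j', hj', le_of_lt h1⟩
  obtain ⟨k₂, hk₂, hk₂le⟩ : ∃ k₂ ∈ B', k ≤ k₂ := by
    rcases fiber_elem_bound hnc hF hk with h | ⟨_, _, k', hk', _, h2⟩
    · exact ⟨k, h, le_rfl⟩
    · exact ⟨k', hk', le_of_lt h2⟩
  refine ⟨j₂, hj₂, k₂, hk₂, fun x hx => ?_⟩
  have hxf : x ∈ fiber π F B := subset_fiber_self hB hBF hx
  exact ⟨lt_of_le_of_lt hj₂le (hjk x hxf).1, lt_of_lt_of_le (hjk x hxf).2 hk₂le⟩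

end Fiber

section Quot

variable {F : Finset (Finset ℕ)}

lemma mem_quot {C : Finset ℕ} :
    C ∈ quot π F ↔ ∃ B, B ∈ π ∧ B ∉ F ∧ fiber π F B = C := by
  simp only [quot, Finset.mem_image, Finset.mem_filter]
  tauto

lemma reach_fiber (hnc : IsNC π) (hF : ∀ B ∈ F, Inner π B) {B₀ : Finset ℕ}
    (hB₀ : B₀ ∈ π) (hB₀F : B₀ ∉ F) :
    ∀ n : ℕ, ∀ X : Finset ℕ, X ∈ π → depth π X ≤ n → qtop π F X = B₀ →
      Relation.ReflTransGen
        (fun X Y => X ∈ π ∧ Y ∈ π ∧ X ⊆ fiber π F B₀ ∧ Y ⊆ fiber π F B₀ ∧ AdjBlocks π X Y)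
        X B₀ := by
  intro n
  induction n with
  | zero =>
    intro X hX hn hq
    rw [qtop_of_not_mem (not_mem_F_of_depth_zero hF (Nat.le_zero.1 hn))] at hq
    rw [← hq]
  | succ n ih =>
    intro X hX hn hq
    by_cases hXF : X ∈ F
    · have hI : Inner π X := hF X hXF
      have hd := parent_depth_lt hnc hI
      have hqP : qtop π F (parent π X) = B₀ := by rw [qtop_parent hnc hF hXF, hq]
      refine Relation.ReflTransGen.head ?_ (ih (parent π X) (parent_mem hnc hI) (by omega) hqP)
      refine ⟨hX, parent_mem hnc hI, ?_, ?_, Or.inl (imm_parent hnc hI)⟩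
      · have := subset_fiber_qtop (F := F) hX
        rwa [hq] at this
      · have := subset_fiber_qtop (F := F) (parent_mem hnc hI)
        rwa [hqP] at this
    · rw [qtop_of_not_mem hXF] at hq
      rw [← hq]

lemma isQuotient_quot (hnc : IsNC π) (hF : ∀ B ∈ F, Inner π B) :
    IsQuotient π (quot π F) := by
  refine ⟨?_, ?_, ?_, ?_, ?_⟩
  · intro C hC
    obtain ⟨B, hB, hBF, rfl⟩ := (mem_quot _).1 hC
    exact fiber_nonempty hnc hB hBF
  · intro C hC C' hC' hne
    obtain ⟨B, hB, hBF, rfl⟩ := (mem_quot _).1 hC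
    obtain ⟨B', hB', hBF', rfl⟩ := (mem_quot _).1 hC'
    exact fiber_disjoint hnc (fun h => hne (h ▸ rfl))
  · ext x
    simp only [Finset.mem_biUnion, id_eq]
    constructor
    · rintro ⟨C, hC, hx⟩
      obtain ⟨B, hB, hBF, rfl⟩ := (mem_quot _).1 hC
      obtain ⟨X, hX, _, hxX⟩ := mem_fiber.1 hx
      exact ⟨X, hX, hxX⟩
    · rintro ⟨X, hX, hxX⟩
      exact ⟨fiber π F (qtop π F X),
        (mem_quot _).2 ⟨qtop π F X, qtop_mem hnc hF hX, qtop_not_mem hnc hF hX, rfl⟩,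
        subset_fiber_qtop hX hxX⟩
  · intro B hB
    exact ⟨fiber π F (qtop π F B),
      (mem_quot _).2 ⟨qtop π F B, qtop_mem hnc hF hB, qtop_not_mem hnc hF hB, rfl⟩,
      subset_fiber_qtop hB⟩
  · intro C hC V hV W hW hVC hWC
    obtain ⟨B₀, hB₀, hB₀F, rfl⟩ := (mem_quot _).1 hC
    have hqV : qtop π F V = B₀ := qtop_eq_of_subset_fiber hnc hV hVC
    have hqW : qtop π F W = B₀ := qtop_eq_of_subset_fiber hnc hW hWC
    have h1 := reach_fiber _ hnc hF hB₀ hB₀F _ V hV le_rfl hqV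
    have h2 := reach_fiber _ hnc hF hB₀ hB₀F _ W hW le_rfl hqW
    have hsymm : Symmetric
        (fun X Y => X ∈ π ∧ Y ∈ π ∧ X ⊆ fiber π F B₀ ∧ Y ⊆ fiber π F B₀ ∧ AdjBlocks π X Y) :=
      fun X Y ⟨a, b, c, d, e⟩ => ⟨b, a, d, c, e.symm⟩
    exact h1.trans (@Std.Symm.symm _ _ (@Relation.ReflTransGen.symmetric _ _ ⟨fun _ _ h => hsymm h⟩) _ _ h2)

end Quot

section Count

variable {F : Finset (Finset ℕ)}

lemma innerCount_eq (τ : Blocks) :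
    innerCount τ = (τ.filter (fun V => ∃ W ∈ τ, NestedIn V W)).card := by
  rw [innerCount, ← Set.ncard_coe_finset]
  congr 1
  ext V
  simp [Finset.mem_filter]

lemma quot_filter_inner (hnc : IsNC π) (hF : ∀ B ∈ F, Inner π B) :
    (quot π F).filter (fun V => ∃ W ∈ quot π F, NestedIn V W)
      = ((π.filter (fun B => ∃ W ∈ π, NestedIn B W)) \ F).image (fiber π F) := by
  ext C
  simp only [Finset.mem_filter, Finset.mem_image, Finset.mem_sdiff]
  constructor
  · rintro ⟨hC, W, hW, hn⟩
    obtain ⟨B, hB, hBF, rfl⟩ := (mem_quot _).1 hC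
    obtain ⟨W', hW', hWF', rfl⟩ := (mem_quot _).1 hW
    exact ⟨B, ⟨⟨hB, W', hW',
      nested_of_nested_fiber hnc hF hB hBF hn⟩, hBF⟩, rfl⟩
  · rintro ⟨B, ⟨hBf, hBF⟩, rfl⟩
    obtain ⟨hB, W, hW, hn⟩ := hBf
    have hI : Inner π B := ⟨hB, W, hW, hn⟩
    obtain ⟨hnest, _⟩ := nested_fiber_of_inner hnc hF hI hBF
    exact ⟨(mem_quot _).2 ⟨B, hB, hBF, rfl⟩,
      fiber π F (qtop π F (parent π B)),
      (mem_quot _).2 ⟨qtop π F (parent π B), qtop_mem hnc hF (parent_mem hnc hI),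
        qtop_not_mem hnc hF (parent_mem hnc hI), rfl⟩, hnest⟩

lemma innerCount_quot (hnc : IsNC π) (hF : ∀ B ∈ F, Inner π B) :
    innerCount (quot π F) + F.card = innerCount π := by
  have hsub : F ⊆ π.filter (fun B => ∃ W ∈ π, NestedIn B W) := fun B hB =>
    Finset.mem_filter.2 ⟨(hF B hB).1, (hF B hB).2⟩
  have hinj : Set.InjOn (fiber π F)
      ↑((π.filter (fun B => ∃ W ∈ π, NestedIn B W)) \ F) := by
    intro B hB B' hB' h
    have hB1 := Finset.mem_sdiff.1 (Finset.mem_coe.1 hB)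
    exact fiber_inj hnc hF (Finset.mem_filter.1 hB1.1).1 hB1.2 h
  rw [innerCount_eq, innerCount_eq, quot_filter_inner _ hnc hF,
    Finset.card_image_of_injOn hinj, Finset.card_sdiff_of_subset hsub]
  have := Finset.card_le_card hsub
  omega

end Count

section Inverse

noncomputable def Fof (τ : Blocks) : Finset (Finset ℕ) :=
  π.filter (fun B => (∃ W ∈ π, NestedIn B W) ∧ ∃ C ∈ τ, B ⊆ C ∧ parent π B ⊆ C)

variable {π}

lemma Fof_inner {τ : Blocks} : ∀ B ∈ Fof π τ, Inner π B := by
  intro B hB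
  have h := Finset.mem_filter.1 hB
  exact ⟨h.1, h.2.1⟩

lemma Fof_quot (hnc : IsNC π) {F : Finset (Finset ℕ)} (hF : ∀ B ∈ F, Inner π B) :
    Fof π (quot π F) = F := by
  ext B
  simp only [Fof, Finset.mem_filter]
  constructor
  · rintro ⟨hB, hin, C, hC, hBC, hPC⟩
    have hI : Inner π B := ⟨hB, hin⟩
    by_contra hBF
    obtain ⟨B₀, hB₀, hB₀F, rfl⟩ := (mem_quot _).1 hC
    have h1 : qtop π F B = B₀ := qtop_eq_of_subset_fiber hnc hB hBC
    rw [qtop_of_not_mem hBF] at h1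
    subst h1
    have h2 : qtop π F (parent π B) = B :=
      qtop_eq_of_subset_fiber hnc (parent_mem hnc hI) hPC
    exact (nested_fiber_of_inner hnc hF hI hBF).2 h2
  · intro hBF
    have hI : Inner π B := hF B hBF
    refine ⟨hI.1, hI.2, fiber π F (qtop π F B),
      (mem_quot _).2 ⟨qtop π F B, qtop_mem hnc hF hI.1, qtop_not_mem hnc hF hI.1, rfl⟩,
      subset_fiber_qtop hI.1, ?_⟩
    have := subset_fiber_qtop (F := F) (parent_mem hnc hI)
    rwa [qtop_parent hnc hF hBF] at this

section Surj

variable {τ : Blocks}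

lemma tau_eq_of_mem (hnc : IsNC π) (hτ : IsQuotient π τ) {C C' : Finset ℕ} (hC : C ∈ τ) (hC' : C' ∈ τ) {x : ℕ}
    (hx : x ∈ C) (hx' : x ∈ C') : C = C' := by
  by_contra hne
  exact Finset.disjoint_left.1 (hτ.2.1 C hC C' hC' hne) hx hx'

lemma cover (hnc : IsNC π) (hτ : IsQuotient π τ) {C : Finset ℕ} (hC : C ∈ τ) {x : ℕ} (hx : x ∈ C) :
    ∃ X ∈ π, x ∈ X ∧ X ⊆ C := by
  have hx1 : x ∈ τ.biUnion id := Finset.mem_biUnion.2 ⟨C, hC, hx⟩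
  rw [hτ.2.2.1] at hx1
  obtain ⟨X, hX, hxX⟩ := Finset.mem_biUnion.1 hx1
  obtain ⟨C', hC', hXC'⟩ := hτ.2.2.2.1 X hX
  have : C' = C := tau_eq_of_mem hnc hτ hC' hC (hXC' hxX) hx
  exact ⟨X, hX, hxX, this ▸ hXC'⟩

lemma Fof_step (hnc : IsNC π) (hτ : IsQuotient π τ) {X C : Finset ℕ} (hX : X ∈ Fof π τ) (hC : C ∈ τ) (hXC : X ⊆ C) :
    parent π X ⊆ C := by
  obtain ⟨hXπ, _, C', hC', hXC', hPC'⟩ := Finset.mem_filter.1 hX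
  obtain ⟨x, hx⟩ := hnc.1 X hXπ
  rwa [tau_eq_of_mem hnc hτ hC' hC (hXC' hx) (hXC hx)] at hPC'

lemma qtop_subset (hnc : IsNC π) (hτ : IsQuotient π τ) :
    ∀ n : ℕ, ∀ X : Finset ℕ, X ∈ π → depth π X ≤ n → ∀ C ∈ τ, X ⊆ C →
      qtop π (Fof π τ) X ⊆ C := by
  intro n
  induction n with
  | zero =>
    intro X hX hn C hC hXC
    rwa [qtop_of_not_mem (not_mem_F_of_depth_zero Fof_inner (Nat.le_zero.1 hn))]
  | succ n ih =>
    intro X hX hn C hC hXC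
    by_cases hXF : X ∈ Fof π τ
    · have hI : Inner π X := Fof_inner X hXF
      have hd := parent_depth_lt hnc hI
      rw [← qtop_parent hnc Fof_inner hXF]
      exact ih (parent π X) (parent_mem hnc hI) (by omega) C hC (Fof_step hnc hτ hXF hC hXC)
    · rwa [qtop_of_not_mem hXF]

lemma subset_of_qtop_subset (hnc : IsNC π) (hτ : IsQuotient π τ) :
    ∀ n : ℕ, ∀ X : Finset ℕ, X ∈ π → depth π X ≤ n → ∀ C ∈ τ, qtop π (Fof π τ) X ⊆ C →
      X ⊆ C := by
  intro n
  induction n with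
  | zero =>
    intro X hX hn C hC h
    rwa [qtop_of_not_mem (not_mem_F_of_depth_zero Fof_inner (Nat.le_zero.1 hn))] at h
  | succ n ih =>
    intro X hX hn C hC h
    by_cases hXF : X ∈ Fof π τ
    · have hI : Inner π X := Fof_inner X hXF
      have hd := parent_depth_lt hnc hI
      rw [← qtop_parent hnc Fof_inner hXF] at h
      have hPC : parent π X ⊆ C := ih (parent π X) (parent_mem hnc hI) (by omega) C hC h
      obtain ⟨_, _, C', hC', hXC', hPC'⟩ := Finset.mem_filter.1 hXF
      obtain ⟨x, hx⟩ := hnc.1 (parent π X) (parent_mem hnc hI)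
      rwa [tau_eq_of_mem hnc hτ hC' hC (hPC' hx) (hPC hx)] at hXC'
    · rwa [qtop_of_not_mem hXF] at h

lemma qtop_const (hnc : IsNC π) (hτ : IsQuotient π τ) {C V W : Finset ℕ} (hC : C ∈ τ) (hV : V ∈ π) (hW : W ∈ π)
    (hVC : V ⊆ C) (hWC : W ⊆ C) : qtop π (Fof π τ) V = qtop π (Fof π τ) W := by
  have hchain := hτ.2.2.2.2 C hC V hV W hW hVC hWC
  induction hchain with
  | refl => rfl
  | tail h1 h2 ih =>
    obtain ⟨hX, hY, hXC, hYC, hadj⟩ := h2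
    rcases hadj with h | h
    · have hXF : _ ∈ Fof π τ := Finset.mem_filter.2
        ⟨hX, ⟨_, hY, h.1⟩, C, hC, hXC, (parent_unique hnc hX hY h) ▸ hYC⟩
      rw [ih hX hXC, ← qtop_parent hnc Fof_inner hXF, ← parent_unique hnc hX hY h]
    · have hYF : _ ∈ Fof π τ := Finset.mem_filter.2
        ⟨hY, ⟨_, hX, h.1⟩, C, hC, hYC, (parent_unique hnc hY hX h) ▸ hXC⟩
      rw [ih hX hXC, ← qtop_parent hnc Fof_inner hYF, ← parent_unique hnc hY hX h]

lemma tau_block_eq_fiber (hnc : IsNC π) (hτ : IsQuotient π τ) {C : Finset ℕ} (hC : C ∈ τ) :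
    ∃ B₀, B₀ ∈ π ∧ B₀ ∉ Fof π τ ∧ C = fiber π (Fof π τ) B₀ ∧
      ∀ X ∈ π, X ⊆ C → qtop π (Fof π τ) X = B₀ := by
  obtain ⟨x, hx⟩ := hτ.1 C hC
  obtain ⟨X₀, hX₀, hxX₀, hX₀C⟩ := cover hnc hτ hC hx
  refine ⟨qtop π (Fof π τ) X₀, qtop_mem hnc Fof_inner hX₀,
    qtop_not_mem hnc Fof_inner hX₀, ?_, ?_⟩
  · apply Finset.Subset.antisymm
    · intro y hy
      obtain ⟨Y, hY, hyY, hYC⟩ := cover hnc hτ hC hy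
      exact mem_fiber.2 ⟨Y, hY, qtop_const hnc hτ hC hY hX₀ hYC hX₀C, hyY⟩
    · intro y hy
      obtain ⟨Y, hY, hq, hyY⟩ := mem_fiber.1 hy
      have : Y ⊆ C := subset_of_qtop_subset hnc hτ _ Y hY le_rfl C hC
        (hq ▸ qtop_subset hnc hτ _ X₀ hX₀ le_rfl C hC hX₀C)
      exact this hyY
  · intro X hX hXC
    exact qtop_const hnc hτ hC hX hX₀ hXC hX₀C

lemma quot_Fof (hnc : IsNC π) (hτ : IsQuotient π τ) : quot π (Fof π τ) = τ := by
  apply Finset.Subset.antisymm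
  · intro C hC
    obtain ⟨B, hB, hBF, rfl⟩ := (mem_quot _).1 hC
    obtain ⟨C', hC', hBC'⟩ := hτ.2.2.2.1 B hB
    obtain ⟨B₀, hB₀, hB₀F, hCeq, hall⟩ := tau_block_eq_fiber hnc hτ hC'
    have : qtop π (Fof π τ) B = B₀ := hall B hB hBC'
    rw [qtop_of_not_mem hBF] at this
    subst this
    rwa [← hCeq]
  · intro C hC
    obtain ⟨B₀, hB₀, hB₀F, hCeq, _⟩ := tau_block_eq_fiber hnc hτ hC
    exact (mem_quot _).2 ⟨B₀, hB₀, hB₀F, hCeq.symm⟩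

end Surj

end Inverse

section Edges

noncomputable def innerF : Finset (Finset ℕ) :=
  π.filter (fun B => ∃ W ∈ π, NestedIn B W)

noncomputable def FA (A : Set (Finset ℕ × Finset ℕ)) : Finset (Finset ℕ) :=
  (innerF π).filter (fun B => (B, parent π B) ∈ A)

variable {π}

lemma innerF_inner : ∀ B ∈ innerF π, Inner π B := by
  intro B hB
  have h := Finset.mem_filter.1 hB
  exact ⟨h.1, h.2⟩

lemma FA_inner {A : Set (Finset ℕ × Finset ℕ)} : ∀ B ∈ FA π A, Inner π B :=
  fun B hB => innerF_inner B (Finset.mem_filter.1 hB).1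

lemma edge_iff (hnc : IsNC π) {V W : Finset ℕ} :
    (V, W) ∈ nestEdges π ↔ V ∈ innerF π ∧ W = parent π V := by
  constructor
  · rintro ⟨hV, hW, himm⟩
    exact ⟨Finset.mem_filter.2 ⟨hV, W, hW, himm.1⟩, parent_unique hnc hV hW himm⟩
  · rintro ⟨hV, rfl⟩
    have hI : Inner π V := innerF_inner V hV
    exact ⟨hI.1, parent_mem hnc hI, imm_parent hnc hI⟩

lemma pairmap_inj : Function.Injective (fun B => (B, parent π B)) :=
  fun a b h => congrArg Prod.fst h

lemma FA_spec (hnc : IsNC π) {A : Set (Finset ℕ × Finset ℕ)} (hA : A ⊆ nestEdges π) :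
    A = (fun B => (B, parent π B)) '' ↑(FA π A) := by
  ext ⟨V, W⟩
  constructor
  · intro hp
    obtain ⟨hV, rfl⟩ := (edge_iff hnc).1 (hA hp)
    exact ⟨V, Finset.mem_coe.2 (Finset.mem_filter.2 ⟨hV, hp⟩), rfl⟩
  · rintro ⟨B, hB, heq⟩
    have h := Finset.mem_filter.1 (Finset.mem_coe.1 hB)
    rw [← heq]
    exact h.2

lemma FA_ncard (hnc : IsNC π) {A : Set (Finset ℕ × Finset ℕ)} (hA : A ⊆ nestEdges π) :
    A.ncard = (FA π A).card := by
  conv_lhs => rw [FA_spec hnc hA]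
  rw [Set.ncard_image_of_injective _ pairmap_inj, Set.ncard_coe_finset]

lemma FA_image {F : Finset (Finset ℕ)} :
    FA π ((fun B => (B, parent π B)) '' ↑F) = F ∩ innerF π := by
  ext B
  simp only [FA, Finset.mem_filter, Finset.mem_inter, Set.mem_image, Finset.mem_coe]
  constructor
  · rintro ⟨hB, B', hB', heq⟩
    have : B' = B := congrArg Prod.fst heq
    exact ⟨this ▸ hB', hB⟩
  · rintro ⟨hBF, hBi⟩
    exact ⟨hBi, B, hBF, rfl⟩

lemma FA_image_of_subset {F : Finset (Finset ℕ)} (hF : F ⊆ innerF π) :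
    FA π ((fun B => (B, parent π B)) '' ↑F) = F := by
  rw [FA_image, Finset.inter_eq_left.2 hF]

lemma Fof_subset_innerF {τ : Blocks} : Fof π τ ⊆ innerF π := by
  intro B hB
  have h := Finset.mem_filter.1 hB
  exact Finset.mem_filter.2 ⟨h.1, h.2.1⟩

lemma innerCount_eq_card_innerF : innerCount π = (innerF π).card := innerCount_eq π

end Edges

lemma powersum (n : ℕ) (hn : 1 ≤ n) (s : Finset (Finset ℕ)) :
    ∑ F ∈ s.powerset, (n-1)^(s.card - F.card) = n ^ s.card := by
  induction s using Finset.induction_on with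
  | empty => simp
  | @insert a s ha ih =>
    rw [Finset.sum_powerset_insert ha]
    have h1 : ∀ t ∈ s.powerset, (n-1)^((insert a s).card - t.card)
        = (n-1) * (n-1)^(s.card - t.card) := by
      intro t ht
      have hle := Finset.card_le_card (Finset.mem_powerset.1 ht)
      rw [Finset.card_insert_of_notMem ha, ← pow_succ']
      congr 1
      omega
    have h2 : ∀ t ∈ s.powerset, (n-1)^((insert a s).card - (insert a t).card)
        = (n-1)^(s.card - t.card) := by
      intro t ht
      have hts := Finset.mem_powerset.1 ht
      have hat : a ∉ t := fun h => ha (hts h)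
      rw [Finset.card_insert_of_notMem ha, Finset.card_insert_of_notMem hat]
      congr 1
      omega
    rw [Finset.sum_congr rfl h1, Finset.sum_congr rfl h2, ← Finset.mul_sum, ih,
      Finset.card_insert_of_notMem ha]
    have : (n-1) * n ^ s.card + n ^ s.card = ((n-1)+1) * n ^ s.card := by ring
    rw [this, Nat.sub_add_cancel hn, pow_succ, mul_comm]

end NCQ

open Classical in
theorem stmt7 (π : Blocks) (hnc : IsNC π) :
    (∃ Φ : {A : Set (Finset ℕ × Finset ℕ) // A ⊆ nestEdges π} ≃ {τ : Blocks // IsQuotient π τ},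
        ∀ A, innerCount (Φ A).1 + A.1.ncard = innerCount π) ∧
    (∀ n : ℕ, 1 ≤ n →
      ∑ τ ∈ ((π.biUnion id).powerset.powerset).filter (fun τ => IsQuotient π τ),
        (n - 1) ^ innerCount τ = n ^ innerCount π) := by
  classical
  constructor
  · have hbij : Function.Bijective
        (fun A : {A : Set (Finset ℕ × Finset ℕ) // A ⊆ nestEdges π} =>
          (⟨NCQ.quot π (NCQ.FA π A.1), NCQ.isQuotient_quot π hnc NCQ.FA_inner⟩ :
            {τ : Blocks // IsQuotient π τ})) := by
      constructor
      · rintro ⟨A, hA⟩ ⟨A', hA'⟩ h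
        simp only [Subtype.mk.injEq] at h ⊢
        have h1 : NCQ.FA π A = NCQ.FA π A' := by
          have e1 := NCQ.Fof_quot hnc (NCQ.FA_inner (A := A))
          have e2 := NCQ.Fof_quot hnc (NCQ.FA_inner (A := A'))
          rw [← e1, ← e2, h]
        rw [NCQ.FA_spec hnc hA, NCQ.FA_spec hnc hA', h1]
      · rintro ⟨τ, hτ⟩
        have hA : ((fun B => (B, NCQ.parent π B)) '' ↑(NCQ.Fof π τ)) ⊆ nestEdges π := by
          rintro ⟨V, W⟩ ⟨B, hB, heq⟩
          rw [← heq]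
          exact (NCQ.edge_iff hnc).2
            ⟨NCQ.Fof_subset_innerF (Finset.mem_coe.1 hB), rfl⟩
        refine ⟨⟨_, hA⟩, ?_⟩
        simp only [Subtype.mk.injEq]
        rw [NCQ.FA_image_of_subset NCQ.Fof_subset_innerF]
        exact NCQ.quot_Fof hnc hτ
    refine ⟨Equiv.ofBijective _ hbij, ?_⟩
    rintro ⟨A, hA⟩
    show innerCount (NCQ.quot π (NCQ.FA π A)) + A.ncard = innerCount π
    rw [NCQ.FA_ncard hnc hA]
    exact NCQ.innerCount_quot π hnc NCQ.FA_inner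
  · intro n hn
    trans (∑ F ∈ (NCQ.innerF π).powerset, (n-1)^(innerCount π - F.card))
    · refine Finset.sum_nbij' (NCQ.Fof π) (NCQ.quot π) ?_ ?_ ?_ ?_ ?_
      · intro τ hτ
        exact Finset.mem_powerset.2 NCQ.Fof_subset_innerF
      · intro F hF
        have hF' : ∀ B ∈ F, NCQ.Inner π B := fun B hB =>
          NCQ.innerF_inner B (Finset.mem_powerset.1 hF hB)
        refine Finset.mem_filter.2 ⟨Finset.mem_powerset.2 ?_, NCQ.isQuotient_quot π hnc hF'⟩
        intro C hC
        obtain ⟨B, hB, hBF, rfl⟩ := (NCQ.mem_quot _).1 hC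
        refine Finset.mem_powerset.2 ?_
        intro y hy
        obtain ⟨X, hX, _, hyX⟩ := NCQ.mem_fiber.1 hy
        exact Finset.mem_biUnion.2 ⟨X, hX, hyX⟩
      · intro τ hτ
        exact NCQ.quot_Fof hnc (Finset.mem_filter.1 hτ).2
      · intro F hF
        exact NCQ.Fof_quot hnc (fun B hB => NCQ.innerF_inner B (Finset.mem_powerset.1 hF hB))
      · intro τ hτ
        have hq := NCQ.innerCount_quot π hnc (NCQ.Fof_inner (τ := τ))
        rw [NCQ.quot_Fof hnc (Finset.mem_filter.1 hτ).2] at hq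
        congr 1
        omega
    · rw [NCQ.innerCount_eq_card_innerF]
      exact NCQ.powersum n hn _
end

section
/- Fix N and a rooted subtree T of T_{N,free} with n := |{j ∈ [N] : the singleton string j ∈ T}| ≥ 2. Then there exists a unique family of coefficients α_{T,π} ∈ ℝ, indexed by non-crossing partitions π of finite totally ordered sets, such that α_{T,π} = 1 whenever |π| = 1, and for all π: α_{T,π} = n^{−|π|} · Σ_{χ ∈ X_w(π,T)} Π_{χ-components π'} α_{T,π'}. Moreover α_{T,π} ≥ 0 for all π. -/
/-- The alternating reduction of a string: replace each maximal run of
consecutive equal letters by a single occurrence of that letter. -/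
def red {α : Type*} [DecidableEq α] : List α → List α
  | [] => []
  | [a] => [a]
  | a :: b :: t => if a = b then red (b :: t) else a :: red (b :: t)

/-- `V` and `W` lie in the same `χ`-component of `π`: they are joined by a path
in `graph(π) ∖ {∅}` all of whose edges join blocks of the same color. -/
def sameComp {N : ℕ} (π : Blocks) (χ : Finset ℕ → Fin N) (V W : Finset ℕ) : Prop :=
  Relation.ReflTransGen
    (fun X Y => X ∈ π ∧ Y ∈ π ∧ AdjBlocks π X Y ∧ χ X = χ Y) V W

open Classical in
noncomputable def component {N : ℕ} (π : Blocks) (χ : Finset ℕ → Fin N)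
    (V : Finset ℕ) : Finset (Finset ℕ) :=
  π.filter (fun W => sameComp π χ V W)

-- The `χ`-components of `π`.
open Classical in
noncomputable def components {N : ℕ} (π : Blocks) (χ : Finset ℕ → Fin N) :
    Finset Blocks :=
  π.image (fun V => component π χ V)

/-- `L` is the chain of `V` in `π`: the list `(V, V₁, …, V_d)` consisting of `V`
followed by all blocks surrounding `V`, each nested in the next. -/
def IsChainList (π : Blocks) (V : Finset ℕ) (L : List (Finset ℕ)) : Prop :=
  L.head? = some V ∧ (∀ W, W ∈ L.tail ↔ W ∈ π ∧ NestedIn V W) ∧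
  L.Chain' (fun X Y => NestedIn X Y) ∧ L.Nodup

/-- `χ ∈ X_w(π,T)`: for every block `V`, the alternating reduction of the color
string along the chain of `V` lies in `T`. -/
def WeaklyCompatible {N : ℕ} (T : Set (List (Fin N))) (π : Blocks)
    (χ : Finset ℕ → Fin N) : Prop :=
  ∀ V ∈ π, ∀ L : List (Finset ℕ), IsChainList π V L → red (L.map χ) ∈ T

/-- Extend a coloring of the blocks of `π` by a junk value. -/
def extendColor {N : ℕ} [NeZero N] (π : Blocks)
    (χ : {V : Finset ℕ // V ∈ π} → Fin N) : Finset ℕ → Fin N :=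
  fun W => if h : W ∈ π then χ ⟨W, h⟩ else 0

-- The right-hand side of the fixed-point identity for the cumulant
-- coefficients: `n^{−|π|} Σ_{χ ∈ X_w(π,T)} Π_{χ-components π'} a(π')`.
open Classical in
noncomputable def cumulantRHS {N : ℕ} [NeZero N] (n : ℕ) (T : Set (List (Fin N)))
    (a : Blocks → ℝ) (π : Blocks) : ℝ :=
  (∑ χ : ({V : Finset ℕ // V ∈ π} → Fin N),
      if WeaklyCompatible T π (extendColor π χ) then
        ∏ τ ∈ components π (extendColor π χ), a τ
      else 0) / (n : ℝ) ^ π.card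

/-- `a` is a family of cumulant coefficients for `T`: normalized on one-block
partitions, and satisfying the fixed-point identity for all non-crossing `π`. -/
def SatisfiesFP {N : ℕ} [NeZero N] (n : ℕ) (T : Set (List (Fin N)))
    (a : Blocks → ℝ) : Prop :=
  (∀ π : Blocks, IsNC π → π.card = 1 → a π = 1) ∧
  (∀ π : Blocks, IsNC π → a π = cumulantRHS n T a π)

-- NestedIn basic lemmas
lemma nestedIn_trans {V W X : Finset ℕ} (h1 : NestedIn V W) (h2 : NestedIn W X) :
    NestedIn V X := by
  obtain ⟨j, hj, k, hk, hb⟩ := h1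
  obtain ⟨j', hj', k', hk', hb'⟩ := h2
  exact ⟨j', hj', k', hk', fun x hx =>
    ⟨lt_trans (hb' j hj).1 (hb x hx).1, lt_trans (hb x hx).2 (hb' k hk).2⟩⟩

lemma nestedIn_irrefl (V : Finset ℕ) : ¬ NestedIn V V := by
  rintro ⟨j, hj, k, hk, hb⟩
  exact lt_irrefl j (hb j hj).1

lemma nestedIn_asymm {V W : Finset ℕ} (h1 : NestedIn V W) (h2 : NestedIn W V) : False := by
  obtain ⟨j, hj, k, hk, hb⟩ := h1
  obtain ⟨j', hj', k', hk', hb'⟩ := h2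
  exact lt_irrefl j (lt_trans (hb j' hj').1 (hb' j hj).1)

-- sameComp lemmas
lemma sameComp_refl {N : ℕ} (π : Blocks) (χ : Finset ℕ → Fin N) (V : Finset ℕ) :
    sameComp π χ V V := Relation.ReflTransGen.refl

lemma sameComp_symm {N : ℕ} {π : Blocks} {χ : Finset ℕ → Fin N} {V W : Finset ℕ}
    (h : sameComp π χ V W) : sameComp π χ W V := by
  induction h with
  | refl => exact Relation.ReflTransGen.refl
  | tail _ hr ih =>
    obtain ⟨h1, h2, h3, h4⟩ := hr
    exact Relation.ReflTransGen.head ⟨h2, h1, h3.symm, h4.symm⟩ ih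

lemma sameComp_trans {N : ℕ} {π : Blocks} {χ : Finset ℕ → Fin N} {V W X : Finset ℕ}
    (h1 : sameComp π χ V W) (h2 : sameComp π χ W X) : sameComp π χ V X :=
  Relation.ReflTransGen.trans h1 h2

lemma sameComp_color {N : ℕ} {π : Blocks} {χ : Finset ℕ → Fin N} {V W : Finset ℕ}
    (h : sameComp π χ V W) : χ V = χ W := by
  induction h with
  | refl => rfl
  | tail _ h ih => exact ih.trans h.2.2.2

open Classical in
lemma mem_component {N : ℕ} {π : Blocks} {χ : Finset ℕ → Fin N} {V W : Finset ℕ} :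
    W ∈ component π χ V ↔ W ∈ π ∧ sameComp π χ V W := by
  rw [component]; exact Finset.mem_filter

lemma component_subset {N : ℕ} (π : Blocks) (χ : Finset ℕ → Fin N) (V : Finset ℕ) :
    component π χ V ⊆ π := by
  intro x hx; exact (mem_component.1 hx).1

open Classical in
lemma self_mem_component {N : ℕ} {π : Blocks} {χ : Finset ℕ → Fin N} {V : Finset ℕ}
    (h : V ∈ π) : V ∈ component π χ V := mem_component.2 ⟨h, sameComp_refl π χ V⟩

lemma component_eq_of_sameComp {N : ℕ} {π : Blocks} {χ : Finset ℕ → Fin N} {V W : Finset ℕ}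
    (h : sameComp π χ V W) : component π χ V = component π χ W := by
  ext X
  simp only [mem_component]
  exact ⟨fun ⟨hX, hs⟩ => ⟨hX, sameComp_trans (sameComp_symm h) hs⟩,
    fun ⟨hX, hs⟩ => ⟨hX, sameComp_trans h hs⟩⟩

open Classical in
lemma mem_components_iff {N : ℕ} {π : Blocks} {χ : Finset ℕ → Fin N} {τ : Blocks} :
    τ ∈ components π χ ↔ ∃ V ∈ π, component π χ V = τ := by
  simp [components]

lemma components_subset {N : ℕ} {π : Blocks} {χ : Finset ℕ → Fin N} {τ : Blocks}
    (h : τ ∈ components π χ) : τ ⊆ π := by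
  obtain ⟨V, _, rfl⟩ := mem_components_iff.1 h
  exact component_subset π χ V

-- if π itself is a component, then every component is π and χ is constant on π
lemma component_eq_pi {N : ℕ} {π : Blocks} {χ : Finset ℕ → Fin N}
    (h : π ∈ components π χ) : ∀ W ∈ π, component π χ W = π := by
  obtain ⟨V, hV, hc⟩ := mem_components_iff.1 h
  intro W hW
  have hs : sameComp π χ V W := (mem_component.1 (by rw [hc]; exact hW)).2
  rw [← component_eq_of_sameComp hs, hc]

lemma components_eq_singleton {N : ℕ} {π : Blocks} {χ : Finset ℕ → Fin N}
    (h : π ∈ components π χ) : components π χ = {π} := by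
  obtain ⟨V, hV, _⟩ := mem_components_iff.1 h
  apply Finset.eq_singleton_iff_unique_mem.2
  refine ⟨h, fun τ hτ => ?_⟩
  obtain ⟨W, hW, rfl⟩ := mem_components_iff.1 hτ
  exact component_eq_pi h W hW

lemma constant_of_pi_mem {N : ℕ} {π : Blocks} {χ : Finset ℕ → Fin N}
    (h : π ∈ components π χ) {V W : Finset ℕ} (hV : V ∈ π) (hW : W ∈ π) :
    χ V = χ W := by
  have h1 := component_eq_pi h V hV
  have hs : sameComp π χ V W := (mem_component.1 (by rw [h1]; exact hW)).2
  exact sameComp_color hs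

-- red of a constant list
lemma red_const {α : Type*} [DecidableEq α] (c : α) :
    ∀ L : List α, L ≠ [] → (∀ x ∈ L, x = c) → red L = [c]
  | [], h, _ => absurd rfl h
  | [a], _, hc => by rw [hc a (by simp)]; rfl
  | a :: b :: t, _, hc => by
    have ha : a = c := hc a (by simp)
    have hb : b = c := hc b (by simp)
    have : red (a :: b :: t) = red (b :: t) := by
      rw [red]; simp [ha, hb]
    rw [this]
    exact red_const c (b :: t) (by simp) (fun x hx => hc x (List.mem_cons_of_mem a hx))

lemma isNC_subset {π τ : Blocks} (h : IsNC π) (hs : τ ⊆ π) : IsNC τ :=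
  ⟨fun B hB => h.1 B (hs hB), fun B hB C hC => h.2.1 B (hs hB) C (hs hC),
   fun B hB C hC => h.2.2 B (hs hB) C (hs hC)⟩
-- helper: derive nesting from non-crossing
lemma nested_of_lt {π : Blocks} (hNC : IsNC π) {W1 W2 : Finset ℕ}
    (h1 : W1 ∈ π) (h2 : W2 ∈ π) (hne : W1 ≠ W2)
    {j1 k1 j2 k2 : ℕ} (hj1 : j1 ∈ W1) (hk1 : k1 ∈ W1) (hj2 : j2 ∈ W2) (hk2 : k2 ∈ W2)
    (h12 : j1 < j2) (h2k : j2 < k1) (h1k2 : j1 < k2) (_hkk : j2 < k2) :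
    NestedIn W2 W1 := by
  have hdisj : Disjoint W1 W2 := hNC.2.1 W1 h1 W2 h2 hne
  have hcross := hNC.2.2 W1 h1 W2 h2 hne
  -- compare k1 and k2
  have hk12 : k2 < k1 := by
    rcases lt_trichotomy k1 k2 with h | h | h
    · exact absurd ⟨j1, j2, k1, k2, h12, h2k, h, hj1, hk1, hj2, hk2⟩ hcross
    · exact absurd (h ▸ hk1) (Finset.disjoint_left.1 hdisj · hk2)
    · exact h
  refine ⟨j1, hj1, k1, hk1, fun x hx => ?_⟩
  constructor
  · by_contra h
    push_neg at h
    have hxj : x < j1 := lt_of_le_of_ne h (fun he => (Finset.disjoint_left.1 hdisj (he ▸ hj1)) hx)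
    exact (hNC.2.2 W2 h2 W1 h1 hne.symm) ⟨x, j1, k2, k1, hxj, h1k2, hk12, hx, hk2, hj1, hk1⟩
  · by_contra h
    push_neg at h
    have hxk : k1 < x := lt_of_le_of_ne h (fun he => (Finset.disjoint_left.1 hdisj (he.symm ▸ hk1)) hx)
    exact hcross ⟨j1, j2, k1, x, h12, h2k, hxk, hj1, hk1, hj2, hx⟩

/-- Totality: two distinct blocks both surrounding `V` are nested one in the other. -/
lemma nested_total {π : Blocks} (hNC : IsNC π) {V W1 W2 : Finset ℕ}
    (hV : V ∈ π) (h1 : W1 ∈ π) (h2 : W2 ∈ π) (h12 : W1 ≠ W2)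
    (n1 : NestedIn V W1) (n2 : NestedIn V W2) :
    NestedIn W1 W2 ∨ NestedIn W2 W1 := by
  obtain ⟨m, hm⟩ := hNC.1 V hV
  obtain ⟨j1, hj1, k1, hk1, hb1⟩ := n1
  obtain ⟨j2, hj2, k2, hk2, hb2⟩ := n2
  have hj1m := (hb1 m hm).1
  have hmk1 := (hb1 m hm).2
  have hj2m := (hb2 m hm).1
  have hmk2 := (hb2 m hm).2
  have hdisj : Disjoint W1 W2 := hNC.2.1 W1 h1 W2 h2 h12
  have hjj : j1 ≠ j2 := fun he => (Finset.disjoint_left.1 hdisj (he ▸ hj1)) hj2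
  rcases lt_or_gt_of_ne hjj with h | h
  · exact Or.inr (nested_of_lt hNC h1 h2 h12 hj1 hk1 hj2 hk2 h
      (lt_trans hj2m hmk1) (lt_trans hj1m hmk2) (lt_trans hj2m hmk2))
  · exact Or.inl (nested_of_lt hNC h2 h1 h12.symm hj2 hk2 hj1 hk1 h
      (lt_trans hj1m hmk2) (lt_trans hj2m hmk1) (lt_trans hj1m hmk1))

/-- a minimal element for a transitive irreflexive relation on a finite set -/
lemma exists_min_rel {α : Type*} [DecidableEq α] {r : α → α → Prop}
    (htrans : ∀ {a b c}, r a b → r b c → r a c) (hirr : ∀ a, ¬ r a a) :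
    ∀ S : Finset α, S.Nonempty → ∃ m ∈ S, ∀ x ∈ S, ¬ r x m := by
  classical
  intro S
  induction S using Finset.strongInduction with
  | _ S ih =>
    rintro ⟨a, ha⟩
    by_cases hmin : ∀ x ∈ S, ¬ r x a
    · exact ⟨a, ha, hmin⟩
    · push_neg at hmin
      obtain ⟨x, hx, hrx⟩ := hmin
      set S' := S.filter (fun y => r y a) with hS'
      have hsub : S' ⊂ S := by
        refine Finset.ssubset_iff_of_subset (Finset.filter_subset _ _) |>.2 ⟨a, ha, ?_⟩
        simp [hS', hirr a]
      obtain ⟨m, hm, hmmin⟩ := ih S' hsub ⟨x, by simp [hS', hx, hrx]⟩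
      have hma : r m a := (Finset.mem_filter.1 hm).2
      refine ⟨m, (Finset.mem_filter.1 hm).1, fun y hy hr => ?_⟩
      exact hmmin y (Finset.mem_filter.2 ⟨hy, htrans hr hma⟩) hr

/-- Existence of the chain list of a block in a non-crossing partition. -/
lemma chain_exists {π : Blocks} (hNC : IsNC π) :
    ∀ (V : Finset ℕ), V ∈ π → ∃ L, IsChainList π V L := by
  classical
  suffices h : ∀ (c : ℕ) (V : Finset ℕ), V ∈ π →
      (π.filter (fun W => NestedIn V W)).card = c → ∃ L, IsChainList π V L by
    intro V hV; exact h _ V hV rfl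
  intro c
  induction c using Nat.strong_induction_on with
  | _ c ih =>
    intro V hV hc
    set S := π.filter (fun W => NestedIn V W) with hS
    rcases S.eq_empty_or_nonempty with he | hne
    · refine ⟨[V], rfl, fun W => ?_, List.isChain_singleton _, by simp⟩
      simp only [List.tail, List.not_mem_nil, false_iff]
      rintro ⟨hW, hn⟩
      have : W ∈ S := by simp [hS, hW, hn]
      simp [he] at this
    · obtain ⟨m, hm, hmmin⟩ := exists_min_rel (r := NestedIn) (fun hab hbc => nestedIn_trans hab hbc)
        nestedIn_irrefl S hne
      have hmπ : m ∈ π := (Finset.mem_filter.1 hm).1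
      have hVm : NestedIn V m := (Finset.mem_filter.1 hm).2
      have hmleast : ∀ W ∈ S, W ≠ m → NestedIn m W := by
        intro W hW hWm
        rcases nested_total hNC hV (Finset.mem_filter.1 hW).1 hmπ hWm
          (Finset.mem_filter.1 hW).2 hVm with h | h
        · exact absurd h (hmmin W hW)
        · exact h
      have hfm : π.filter (fun W => NestedIn m W) = S.erase m := by
        ext W
        simp only [Finset.mem_filter, Finset.mem_erase, hS]
        constructor
        · rintro ⟨hW, hn⟩
          exact ⟨fun he => nestedIn_irrefl m (he ▸ hn), hW, nestedIn_trans hVm hn⟩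
        · rintro ⟨hne', hW, _⟩
          exact ⟨hW, hmleast W (by simp [hS, hW, ‹NestedIn V W›]) hne'⟩
      have hcard : (π.filter (fun W => NestedIn m W)).card < c := by
        rw [hfm, ← hc]
        exact Finset.card_erase_lt_of_mem hm
      obtain ⟨L0, hL0⟩ := ih _ hcard m hmπ rfl
      obtain ⟨hhead, htail, hchain, hnodup⟩ := hL0
      obtain ⟨m', t0, rfl⟩ : ∃ m' t0, L0 = m' :: t0 := by
        cases L0 with
        | nil => simp at hhead
        | cons a t => exact ⟨a, t, rfl⟩
      have hm' : m = m' := by simpa using hhead.symm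
      subst hm'
      refine ⟨V :: m :: t0, rfl, fun W => ?_, ?_, ?_⟩
      · simp only [List.tail_cons, List.mem_cons]
        constructor
        · rintro (rfl | hW)
          · exact ⟨hmπ, hVm⟩
          · have := (htail W).1 hW
            exact ⟨this.1, nestedIn_trans hVm this.2⟩
        · rintro ⟨hW, hn⟩
          by_cases hWm : W = m
          · exact Or.inl hWm
          · exact Or.inr ((htail W).2 ⟨hW, hmleast W (by simp [hS, hW, hn]) hWm⟩)
      · exact List.isChain_cons_cons.2 ⟨hVm, hchain⟩
      · refine List.nodup_cons.2 ⟨?_, hnodup⟩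
        simp only [List.mem_cons]
        rintro (rfl | hV')
        · exact nestedIn_irrefl V hVm
        · exact nestedIn_asymm hVm ((htail V).1 hV').2
lemma chainList_shape {π : Blocks} {V : Finset ℕ} {L : List (Finset ℕ)}
    (h : IsChainList π V L) : ∃ t, L = V :: t := by
  obtain ⟨hhead, -, -, -⟩ := h
  cases L with
  | nil => simp at hhead
  | cons a t =>
    have : a = V := by simpa using hhead
    exact ⟨t, by rw [this]⟩

lemma chainList_mem_pi {π : Blocks} {V : Finset ℕ} {L : List (Finset ℕ)}
    (h : IsChainList π V L) (hV : V ∈ π) : ∀ X ∈ L, X ∈ π := by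
  obtain ⟨t, rfl⟩ := chainList_shape h
  intro X hX
  rcases List.mem_cons.1 hX with rfl | hX
  · exact hV
  · exact ((h.2.1 X).1 hX).1

/-- A compatible coloring constant on a nonempty `π` has its color's singleton in `T`. -/
lemma weak_const {N : ℕ} {T : Set (List (Fin N))} {π : Blocks} {χ : Finset ℕ → Fin N}
    {c : Fin N} (hNC : IsNC π) {V : Finset ℕ} (hV : V ∈ π)
    (hweak : WeaklyCompatible T π χ) (hconst : ∀ W ∈ π, χ W = c) : [c] ∈ T := by
  obtain ⟨L, hL⟩ := chain_exists hNC V hV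
  have hmem := hweak V hV L hL
  obtain ⟨t, rfl⟩ := chainList_shape hL
  have : red ((V :: t).map χ) = [c] := by
    apply red_const
    · simp
    · intro x hx
      simp only [List.mem_map] at hx
      obtain ⟨X, hX, rfl⟩ := hx
      exact hconst X (chainList_mem_pi hL hV X hX)
  rwa [this] at hmem

lemma isChainList_singleton_iff {π : Blocks} {V : Finset ℕ} (hNC : IsNC π)
    (hπ : π = {V}) (L : List (Finset ℕ)) : IsChainList π V L ↔ L = [V] := by
  constructor
  · intro h
    obtain ⟨t, rfl⟩ := chainList_shape h
    have ht : t = [] := by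
      apply List.eq_nil_iff_forall_not_mem.2
      intro W hW
      have := (h.2.1 W).1 hW
      rw [hπ, Finset.mem_singleton] at this
      exact nestedIn_irrefl V (this.1 ▸ this.2)
    rw [ht]
  · rintro rfl
    refine ⟨rfl, fun W => ?_, List.isChain_singleton _, by simp⟩
    simp only [List.tail_cons, List.not_mem_nil, false_iff]
    rintro ⟨hW, hn⟩
    rw [hπ, Finset.mem_singleton] at hW
    exact nestedIn_irrefl V (hW ▸ hn)

lemma weak_singleton_iff {N : ℕ} {T : Set (List (Fin N))} {π : Blocks} {V : Finset ℕ}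
    (hNC : IsNC π) (hπ : π = {V}) (χ : Finset ℕ → Fin N) :
    WeaklyCompatible T π χ ↔ [χ V] ∈ T := by
  constructor
  · intro h
    have := h V (by rw [hπ]; exact Finset.mem_singleton_self V) [V]
      ((isChainList_singleton_iff hNC hπ [V]).2 rfl)
    simpa [red] using this
  · intro h V' hV' L hL
    rw [hπ, Finset.mem_singleton] at hV'
    subst hV'
    rw [(isChainList_singleton_iff hNC hπ L).1 hL]
    simpa [red] using h

open Classical in
noncomputable def cnt {N : ℕ} [NeZero N] (T : Set (List (Fin N))) (π : Blocks) : ℕ :=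
  (Finset.univ.filter (fun χ : {V : Finset ℕ // V ∈ π} → Fin N =>
    WeaklyCompatible T π (extendColor π χ) ∧ π ∈ components π (extendColor π χ))).card

open Classical in
lemma cnt_le {N : ℕ} [NeZero N] {T : Set (List (Fin N))} {π : Blocks} {n : ℕ}
    (hNC : IsNC π) (hpos : π.Nonempty) (hn : {j : Fin N | [j] ∈ T}.ncard = n) :
    cnt T π ≤ n := by
  obtain ⟨v0, hv0⟩ := hpos
  have hcard : (Finset.univ.filter (fun c : Fin N => [c] ∈ T)).card = n := by
    rw [← hn, Set.ncard_eq_toFinset_card']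
    congr 1
    ext c
    simp
  rw [cnt, ← hcard]
  apply Finset.card_le_card_of_injOn (fun χ => χ ⟨v0, hv0⟩)
  · intro χ hχ
    simp only [Finset.coe_filter, Finset.mem_coe, Finset.mem_filter, Finset.mem_univ, true_and, Set.mem_setOf_eq] at hχ ⊢
    have hconst : ∀ W ∈ π, extendColor π χ W = χ ⟨v0, hv0⟩ := by
      intro W hW
      have := constant_of_pi_mem hχ.2 hW hv0
      rwa [show extendColor π χ v0 = χ ⟨v0, hv0⟩ from dif_pos hv0] at this
    exact weak_const hNC hv0 hχ.1 hconst
  · intro χ1 h1 χ2 h2 heq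
    simp only [Finset.coe_filter, Set.mem_setOf_eq, Finset.mem_univ, true_and] at h1 h2
    funext w
    obtain ⟨W, hW⟩ := w
    have e1 : extendColor π χ1 W = extendColor π χ1 v0 := constant_of_pi_mem h1.2 hW hv0
    have e2 : extendColor π χ2 W = extendColor π χ2 v0 := constant_of_pi_mem h2.2 hW hv0
    have : extendColor π χ1 W = extendColor π χ2 W := by
      rw [e1, e2, show extendColor π χ1 v0 = χ1 ⟨v0, hv0⟩ from dif_pos hv0,
        show extendColor π χ2 v0 = χ2 ⟨v0, hv0⟩ from dif_pos hv0]
      exact heq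
    rwa [show extendColor π χ1 W = χ1 ⟨W, hW⟩ from dif_pos hW,
      show extendColor π χ2 W = χ2 ⟨W, hW⟩ from dif_pos hW] at this

lemma component_card_lt {N : ℕ} {π τ : Blocks} {χ : Finset ℕ → Fin N}
    (h : π ∉ components π χ) (hτ : τ ∈ components π χ) : τ.card < π.card :=
  Finset.card_lt_card (Finset.ssubset_iff_subset_ne.2
    ⟨components_subset hτ, fun he => h (he ▸ hτ)⟩)
open Classical in
noncomputable def coeff {N : ℕ} [NeZero N] (n : ℕ) (T : Set (List (Fin N)))
    (π : Blocks) : ℝ :=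
  if π.card ≤ 1 then 1 else
    (∑ χ : ({V : Finset ℕ // V ∈ π} → Fin N),
      if h : WeaklyCompatible T π (extendColor π χ) ∧
          π ∉ components π (extendColor π χ) then
        ∏ τ ∈ (components π (extendColor π χ)).attach, coeff n T τ.1
      else 0) / ((n : ℝ) ^ π.card - (cnt T π : ℝ))
termination_by π.card
decreasing_by exact component_card_lt h.2 τ.2

open Classical in
lemma coeff_eq {N : ℕ} [NeZero N] (n : ℕ) (T : Set (List (Fin N))) (π : Blocks)
    (h2 : 2 ≤ π.card) :
    coeff n T π =
      (∑ χ : ({V : Finset ℕ // V ∈ π} → Fin N),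
        if WeaklyCompatible T π (extendColor π χ) ∧
            π ∉ components π (extendColor π χ) then
          ∏ τ ∈ components π (extendColor π χ), coeff n T τ
        else 0) / ((n : ℝ) ^ π.card - (cnt T π : ℝ)) := by
  rw [coeff, if_neg (by omega)]
  congr 1
  apply Finset.sum_congr rfl
  intro χ _
  by_cases h : WeaklyCompatible T π (extendColor π χ) ∧ π ∉ components π (extendColor π χ)
  · rw [dif_pos h, if_pos h, Finset.prod_attach]
  · rw [dif_neg h, if_neg h]
open Classical in
lemma sum_split {N : ℕ} [NeZero N] (T : Set (List (Fin N))) (a : Blocks → ℝ)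
    (π : Blocks) :
    (∑ χ : ({V : Finset ℕ // V ∈ π} → Fin N),
      if WeaklyCompatible T π (extendColor π χ) then
        ∏ τ ∈ components π (extendColor π χ), a τ
      else 0)
    = (cnt T π : ℝ) * a π +
      (∑ χ : ({V : Finset ℕ // V ∈ π} → Fin N),
        if WeaklyCompatible T π (extendColor π χ) ∧
            π ∉ components π (extendColor π χ) then
          ∏ τ ∈ components π (extendColor π χ), a τ
        else 0) := by
  have key : ∀ χ : ({V : Finset ℕ // V ∈ π} → Fin N),
      (if WeaklyCompatible T π (extendColor π χ) then
        ∏ τ ∈ components π (extendColor π χ), a τ else 0)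
      = (if WeaklyCompatible T π (extendColor π χ) ∧
            π ∈ components π (extendColor π χ) then a π else 0)
        + (if WeaklyCompatible T π (extendColor π χ) ∧
            π ∉ components π (extendColor π χ) then
          ∏ τ ∈ components π (extendColor π χ), a τ else 0) := by
    intro χ
    by_cases hw : WeaklyCompatible T π (extendColor π χ)
    · by_cases hc : π ∈ components π (extendColor π χ)
      · rw [if_pos hw, if_pos ⟨hw, hc⟩, if_neg (fun h => h.2 hc),
          components_eq_singleton hc, Finset.prod_singleton, add_zero]
      · rw [if_pos hw, if_neg (fun h : _ ∧ _ => hc h.2), if_pos ⟨hw, hc⟩, zero_add]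
    · rw [if_neg hw, if_neg (fun h : _ ∧ _ => hw h.1), if_neg (fun h : _ ∧ _ => hw h.1),
        add_zero]
  rw [Finset.sum_congr rfl (fun χ _ => key χ), Finset.sum_add_distrib]
  congr 1
  rw [← Finset.sum_filter, Finset.sum_const, cnt]
  simp [mul_comm]

open Classical in
lemma identity_of_formula {N : ℕ} [NeZero N] {n : ℕ} {T : Set (List (Fin N))}
    {a : Blocks → ℝ} {π : Blocks}
    (hn0 : (n : ℝ) ^ π.card ≠ 0)
    (hformula : a π * ((n : ℝ) ^ π.card - (cnt T π : ℝ))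
      = ∑ χ : ({V : Finset ℕ // V ∈ π} → Fin N),
          if WeaklyCompatible T π (extendColor π χ) ∧
              π ∉ components π (extendColor π χ) then
            ∏ τ ∈ components π (extendColor π χ), a τ
          else 0) :
    a π = cumulantRHS n T a π := by
  rw [cumulantRHS, sum_split, eq_div_iff hn0]
  rw [mul_sub] at hformula
  linarith [hformula]

open Classical in
lemma formula_of_identity {N : ℕ} [NeZero N] {n : ℕ} {T : Set (List (Fin N))}
    {a : Blocks → ℝ} {π : Blocks}
    (hn0 : (n : ℝ) ^ π.card ≠ 0)
    (hid : a π = cumulantRHS n T a π) :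
    a π * ((n : ℝ) ^ π.card - (cnt T π : ℝ))
      = ∑ χ : ({V : Finset ℕ // V ∈ π} → Fin N),
          if WeaklyCompatible T π (extendColor π χ) ∧
              π ∉ components π (extendColor π χ) then
            ∏ τ ∈ components π (extendColor π χ), a τ
          else 0 := by
  rw [cumulantRHS, sum_split, eq_div_iff hn0] at hid
  rw [mul_sub]
  linarith [hid]
open Classical in
lemma rhs_card_zero {N : ℕ} [NeZero N] (n : ℕ) (T : Set (List (Fin N)))
    (a : Blocks → ℝ) {π : Blocks} (h : π.card = 0) : cumulantRHS n T a π = 1 := by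
  have hπ : π = ∅ := Finset.card_eq_zero.1 h
  subst hπ
  rw [cumulantRHS]
  haveI : IsEmpty {V : Finset ℕ // V ∈ (∅ : Blocks)} := ⟨fun v => absurd v.2 (Finset.notMem_empty _)⟩
  have hcomp : ∀ χ : ({V : Finset ℕ // V ∈ (∅ : Blocks)} → Fin N),
      components (∅ : Blocks) (extendColor ∅ χ) = ∅ := fun χ => by
    simp [components]
  have hweak : ∀ χ : ({V : Finset ℕ // V ∈ (∅ : Blocks)} → Fin N),
      WeaklyCompatible T ∅ (extendColor ∅ χ) := fun χ V hV => by simp at hV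
  have hone : ∀ χ : ({V : Finset ℕ // V ∈ (∅ : Blocks)} → Fin N),
      (if WeaklyCompatible T ∅ (extendColor ∅ χ) then
        ∏ τ ∈ components (∅ : Blocks) (extendColor ∅ χ), a τ else 0) = 1 := fun χ => by
    rw [if_pos (hweak χ), hcomp, Finset.prod_empty]
  rw [Finset.sum_congr rfl (fun χ _ => hone χ), Finset.sum_const]
  have hcard : Fintype.card ({V : Finset ℕ // V ∈ (∅ : Blocks)} → Fin N) = 1 :=
    Fintype.card_eq_one_iff.2 ⟨fun v => isEmptyElim v, fun y => funext fun v => isEmptyElim v⟩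
  simp [Finset.card_univ, hcard]

open Classical in
lemma rhs_card_one {N : ℕ} [NeZero N] {n : ℕ} {T : Set (List (Fin N))}
    (a : Blocks → ℝ) {π : Blocks} (hNC : IsNC π) (h1 : π.card = 1)
    (hn0 : (n : ℝ) ≠ 0)
    (hcard : (Finset.univ.filter (fun c : Fin N => [c] ∈ T)).card = n) :
    cumulantRHS n T a π = a π := by
  obtain ⟨V, rfl⟩ := Finset.card_eq_one.1 h1
  have hV : V ∈ ({V} : Blocks) := Finset.mem_singleton_self V
  have hcomp : ∀ χ : Finset ℕ → Fin N, components ({V} : Blocks) χ = {({V} : Blocks)} := by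
    intro χ
    rw [components, Finset.image_singleton]
    congr 1
    rw [component]
    apply Finset.filter_true_of_mem
    intro W hW
    rw [Finset.mem_singleton] at hW
    subst hW
    exact sameComp_refl _ _ _
  let e : ({W : Finset ℕ // W ∈ ({V} : Blocks)} → Fin N) ≃ Fin N :=
    { toFun := fun χ => χ ⟨V, hV⟩
      invFun := fun c _ => c
      left_inv := fun χ => funext fun w => by
        have hw : w = ⟨V, hV⟩ := Subtype.ext (Finset.mem_singleton.1 w.2)
        rw [hw]
      right_inv := fun c => rfl }
  rw [cumulantRHS]
  have hterm : ∀ χ : ({W : Finset ℕ // W ∈ ({V} : Blocks)} → Fin N),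
      (if WeaklyCompatible T {V} (extendColor {V} χ) then
        ∏ τ ∈ components ({V} : Blocks) (extendColor {V} χ), a τ else 0)
      = (if [χ ⟨V, hV⟩] ∈ T then a {V} else 0) := by
    intro χ
    have hext : extendColor {V} χ V = χ ⟨V, hV⟩ := dif_pos hV
    by_cases hw : [χ ⟨V, hV⟩] ∈ T
    · rw [if_pos ((weak_singleton_iff hNC rfl _).2 (by rw [hext]; exact hw)),
        hcomp, Finset.prod_singleton, if_pos hw]
    · rw [if_neg (fun hc => hw (by rw [← hext]; exact (weak_singleton_iff hNC rfl _).1 hc)),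
        if_neg hw]
  have hsum : (∑ χ : ({W : Finset ℕ // W ∈ ({V} : Blocks)} → Fin N),
      if [χ ⟨V, hV⟩] ∈ T then a {V} else 0)
      = ∑ c : Fin N, if [c] ∈ T then a {V} else 0 :=
    Fintype.sum_equiv e _ _ (fun χ => by show _ = ite ([e χ] ∈ T) _ _; rw [show e χ = χ ⟨V, hV⟩ from rfl])
  rw [Finset.sum_congr rfl (fun χ _ => hterm χ), hsum]
  rw [← Finset.sum_filter, Finset.sum_const, hcard]
  rw [Finset.card_singleton, pow_one, nsmul_eq_mul]
  exact mul_div_cancel_left₀ _ hn0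
open Classical in
lemma filter_card_eq_n {N : ℕ} {T : Set (List (Fin N))} {n : ℕ}
    (hn : {j : Fin N | [j] ∈ T}.ncard = n) :
    (Finset.univ.filter (fun c : Fin N => [c] ∈ T)).card = n := by
  rw [← hn, Set.ncard_eq_toFinset_card']
  apply Finset.card_nbij id (fun a ha => by simpa using (by simpa using ha : [a] ∈ T))
    (fun a _ b _ h => h)
  intro c hc
  refine ⟨c, ?_, rfl⟩
  simp only [Finset.coe_filter, Finset.mem_univ, true_and, Set.mem_setOf_eq]
  simpa using hc

lemma cnt_lt {N : ℕ} [NeZero N] {T : Set (List (Fin N))} {π : Blocks} {n : ℕ}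
    (hNC : IsNC π) (h2 : 2 ≤ π.card) (hn2 : 2 ≤ n)
    (hn : {j : Fin N | [j] ∈ T}.ncard = n) :
    (cnt T π : ℝ) < (n : ℝ) ^ π.card := by
  have hpos : π.Nonempty := Finset.card_pos.1 (by omega)
  have h1 : (cnt T π : ℝ) ≤ (n : ℝ) := by
    exact_mod_cast cnt_le hNC hpos hn
  have h2' : (n : ℝ) < (n : ℝ) ^ π.card := by
    calc (n : ℝ) = (n : ℝ) ^ 1 := (pow_one _).symm
    _ < (n : ℝ) ^ π.card := by
        apply pow_lt_pow_right₀ _ (by omega)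
        exact_mod_cast hn2
  linarith

open Classical in
lemma cnt_empty {N : ℕ} [NeZero N] (T : Set (List (Fin N))) : cnt T (∅ : Blocks) = 0 := by
  rw [cnt]
  apply Finset.card_eq_zero.2
  apply Finset.filter_false_of_mem
  intro χ _
  rintro ⟨-, hc⟩
  simp [components] at hc

open Classical in
theorem coeff_satisfies {N : ℕ} [NeZero N] {n : ℕ} (hn2 : 2 ≤ n)
    (T : Set (List (Fin N))) (hn : {j : Fin N | [j] ∈ T}.ncard = n) :
    SatisfiesFP n T (coeff n T) := by
  have hn0 : (n : ℝ) ≠ 0 := Nat.cast_ne_zero.2 (by omega)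
  constructor
  · intro π _ h1
    rw [coeff, if_pos (by omega)]
  · intro π hNC
    rcases Nat.lt_or_ge π.card 2 with hlt | hge
    · interval_cases h : π.card
      · rw [rhs_card_zero n T _ h, coeff, if_pos (by omega)]
      · exact (rhs_card_one _ hNC h hn0 (filter_card_eq_n hn)).symm
    · apply identity_of_formula (pow_ne_zero _ hn0)
      rw [coeff_eq n T π hge]
      exact div_mul_cancel₀ _ (ne_of_gt (sub_pos.2 (cnt_lt hNC hge hn2 hn)))
open Classical in
lemma unique_on_NC {N : ℕ} [NeZero N] {n : ℕ} (hn2 : 2 ≤ n) {T : Set (List (Fin N))}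
    (hn : {j : Fin N | [j] ∈ T}.ncard = n) {a a' : Blocks → ℝ}
    (ha : SatisfiesFP n T a) (ha' : SatisfiesFP n T a') :
    ∀ π : Blocks, IsNC π → a π = a' π := by
  have hn0 : (n : ℝ) ≠ 0 := Nat.cast_ne_zero.2 (by omega)
  suffices h : ∀ k (π : Blocks), IsNC π → π.card = k → a π = a' π by
    intro π hNC; exact h _ π hNC rfl
  intro k
  induction k using Nat.strong_induction_on with
  | _ k ih =>
    intro π hNC hk
    by_cases h1 : π.card = 1
    · rw [ha.1 π hNC h1, ha'.1 π hNC h1]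
    · have hf := formula_of_identity (pow_ne_zero π.card hn0) (ha.2 π hNC)
      have hf' := formula_of_identity (pow_ne_zero π.card hn0) (ha'.2 π hNC)
      have hS : (∑ χ : ({V : Finset ℕ // V ∈ π} → Fin N),
          if WeaklyCompatible T π (extendColor π χ) ∧
              π ∉ components π (extendColor π χ) then
            ∏ τ ∈ components π (extendColor π χ), a τ
          else 0)
        = ∑ χ : ({V : Finset ℕ // V ∈ π} → Fin N),
          if WeaklyCompatible T π (extendColor π χ) ∧
              π ∉ components π (extendColor π χ) then
            ∏ τ ∈ components π (extendColor π χ), a' τ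
          else 0 := by
        apply Finset.sum_congr rfl
        intro χ _
        by_cases hc : WeaklyCompatible T π (extendColor π χ) ∧
            π ∉ components π (extendColor π χ)
        · rw [if_pos hc, if_pos hc]
          apply Finset.prod_congr rfl
          intro τ hτ
          exact ih τ.card (hk ▸ component_card_lt hc.2 hτ) τ
            (isNC_subset hNC (components_subset hτ)) rfl
        · rw [if_neg hc, if_neg hc]
      have hd : ((n : ℝ) ^ π.card - (cnt T π : ℝ)) ≠ 0 := by
        by_cases hk0 : π.card = 0
        · have hπ : π = ∅ := Finset.card_eq_zero.1 hk0
          subst hπ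
          rw [cnt_empty, hk0]
          norm_num
        · exact ne_of_gt (sub_pos.2 (cnt_lt hNC (by omega) hn2 hn))
      exact mul_right_cancel₀ hd (hf.trans (hS.trans hf'.symm))

open Classical in
lemma coeff_nonneg_aux {N : ℕ} [NeZero N] {n : ℕ} (hn2 : 2 ≤ n) (T : Set (List (Fin N)))
    (hn : {j : Fin N | [j] ∈ T}.ncard = n) :
    ∀ k (π : Blocks), IsNC π → π.card = k → 0 ≤ coeff n T π := by
  intro k
  induction k using Nat.strong_induction_on with
  | _ k ih =>
    intro π hNC hk
    by_cases hle : π.card ≤ 1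
    · rw [coeff, if_pos hle]
      norm_num
    · rw [coeff_eq n T π (by omega)]
      apply div_nonneg
      · apply Finset.sum_nonneg
        intro χ _
        by_cases hc : WeaklyCompatible T π (extendColor π χ) ∧
            π ∉ components π (extendColor π χ)
        · rw [if_pos hc]
          apply Finset.prod_nonneg
          intro τ hτ
          exact ih τ.card (hk ▸ component_card_lt hc.2 hτ) τ
            (isNC_subset hNC (components_subset hτ)) rfl
        · rw [if_neg hc]
      · have := cnt_lt hNC (by omega) hn2 hn
        linarith

/-- For a rooted subtree `T` of `T_{N,free}` whose root has `n ≥ 2` neighbors,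
there exists a family of coefficients `α_{T,π}` with `α_{T,π} = 1` when `|π| = 1`
satisfying the fixed-point identity
`α_{T,π} = n^{−|π|} Σ_{χ ∈ X_w(π,T)} Π_{χ-components π'} α_{T,π'}`;
it is unique (on non-crossing partitions), and nonnegative. -/
theorem stmt9 {N : ℕ} [NeZero N] (n : ℕ) (hn2 : 2 ≤ n)
    (T : Set (List (Fin N))) (hT : IsRootedSubtree T)
    (hn : {j : Fin N | [j] ∈ T}.ncard = n) :
    (∃ a : Blocks → ℝ, SatisfiesFP n T a) ∧
    (∀ a a' : Blocks → ℝ, SatisfiesFP n T a → SatisfiesFP n T a' →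
      ∀ π : Blocks, IsNC π → a π = a' π) ∧
    (∀ a : Blocks → ℝ, SatisfiesFP n T a → ∀ π : Blocks, IsNC π → 0 ≤ a π) := by
  refine ⟨⟨coeff n T, coeff_satisfies hn2 T hn⟩, ?_, ?_⟩
  · intro a a' ha ha' π hNC
    exact unique_on_NC hn2 hn ha ha' π hNC
  · intro a ha π hNC
    rw [unique_on_NC hn2 hn ha (coeff_satisfies hn2 T hn) π hNC]
    exact coeff_nonneg_aux hn2 T hn π.card π hNC rfl
end
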